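/- arXiv:1504.04424 — 5 statements merged into one kernel-verified Lean document; each statement's English description precedes it below -/
import Mathlib

section
/- Let V be a word over any alphabet, let Σ be a finite alphabet with q ≥ 2 letters, and let W_n ∈ Σ^n be chosen uniformly at random. Then V is doubled if and only if lim_{n→∞} E(δ(V,W_n)) = 0. -/
open Filter Asymptotics

/-- The substring `W[i,j]` of `W`: the `j - i` consecutive letters of `W`
beginning with the `(i+1)`-th. -/
def subword {β : Type*} (W : List β) (i j : ℕ) : List β :=
  (W.drop i).take (j - i)

/-- `W` is an instance of `V` provided `W = φ(V)` for some nonerasing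
homomorphism `φ`, i.e. a map on letters (no letter mapping to the empty word)
extended by concatenation. -/
def IsInstance {α β : Type*} (V : List α) (W : List β) : Prop :=
  ∃ φ : α → List β, (∀ a, φ a ≠ []) ∧ W = (V.map φ).flatten

/-- A word is doubled provided every letter occurring in it occurs at least twice. -/
def Doubled {α : Type*} [DecidableEq α] (V : List α) : Prop :=
  ∀ a ∈ V, 2 ≤ V.count a

open Classical in
/-- `density V W` is the proportion of the `C(|W|+1, 2)` substrings of `W`
(indexed by pairs `(i,j)` with `0 ≤ i < j ≤ |W|`) that are instances of `V`. -/
noncomputable def density {α β : Type*} (V : List α) (W : List β) : ℝ :=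
  (((Finset.range (W.length + 1) ×ˢ Finset.range (W.length + 1)).filter
      (fun p => p.1 < p.2 ∧ IsInstance V (subword W p.1 p.2))).card : ℝ) /
    (Nat.choose (W.length + 1) 2)

/-- The expected density of `V` in a word of length `n` chosen uniformly at
random over the alphabet `σ` (words of length `n` being encoded as `Fin n → σ`). -/
noncomputable def expDensity {α : Type*} (V : List α) (σ : Type*) [Fintype σ] (n : ℕ) : ℝ :=
  (∑ w : Fin n → σ, density V (List.ofFn w)) / (Fintype.card σ : ℝ) ^ n

/-- `homCount V W` counts the encounters of `V` in `W`: triples `(a, b, φ)`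
where `φ` is a nonerasing homomorphism from the letters of `V` with
`W[a,b] = φ(V)`. -/
noncomputable def homCount {α σ : Type*} (V : List α) (W : List σ) : ℕ :=
  Set.ncard {t : ℕ × ℕ × ({a : α // a ∈ V} → List σ) |
    t.1 < t.2.1 ∧ t.2.1 ≤ W.length ∧ (∀ a, t.2.2 a ≠ []) ∧
    subword W t.1 t.2.1 = (V.attach.map t.2.2).flatten}

/-- Expected number of encounters of `V` in a uniformly random word of length `n`. -/
noncomputable def expHom {α : Type*} (V : List α) (σ : Type*) [Fintype σ] (n : ℕ) : ℝ :=
  (∑ w : Fin n → σ, (homCount V (List.ofFn w) : ℝ)) / (Fintype.card σ : ℝ) ^ n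

/-- `instProb V σ m` is the proportion of words in `σ^m` that are instances of `V`. -/
noncomputable def instProb {α : Type*} (V : List α) (σ : Type*) [Fintype σ] (m : ℕ) : ℝ :=
  (Nat.card {w : Fin m → σ // IsInstance V (List.ofFn w)} : ℝ) / (Fintype.card σ : ℝ) ^ m

/-- The variance of the density of `V` in a uniformly random word of length `n`. -/
noncomputable def varDensity {α : Type*} (V : List α) (σ : Type*) [Fintype σ] (n : ℕ) : ℝ :=
  (∑ w : Fin n → σ, (density V (List.ofFn w) - expDensity V σ n) ^ 2) /
    (Fintype.card σ : ℝ) ^ n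

lemma subword_ofFn {σ : Type*} {n i m : ℕ} (h : i + m ≤ n) (w : Fin n → σ) :
    subword (List.ofFn w) i (i + m) = List.ofFn (fun t : Fin m => w ⟨i + t, by omega⟩) := by
  apply List.ext_getElem
  · simp [subword]; omega
  · intro k h1 h2
    simp [subword, List.getElem_take, List.getElem_drop]

def finWinEquiv (i m n : ℕ) (h : i + m ≤ n) : Fin m ⊕ Fin (n - m) ≃ Fin n where
  toFun x := match x with
    | .inl t => ⟨i + t, by omega⟩
    | .inr s => if (s : ℕ) < i then ⟨s, by omega⟩ else ⟨(s : ℕ) + m, by omega⟩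
  invFun k :=
    if h1 : (k : ℕ) < i then .inr ⟨k, by omega⟩
    else if h2 : (k : ℕ) < i + m then .inl ⟨(k : ℕ) - i, by omega⟩
    else .inr ⟨(k : ℕ) - m, by omega⟩
  left_inv := by
    rintro (t | s)
    · have := t.isLt
      simp only [dif_neg (show ¬ (i + (t:ℕ) < i) by omega), dif_pos (show i + (t:ℕ) < i + m by omega)]
      congr 1; ext; simp
    · have := s.isLt
      by_cases hs : (s : ℕ) < i
      · simp [hs]
      · simp only [if_neg hs]
        simp only [dif_neg (show ¬ ((s:ℕ) + m < i) by omega), dif_neg (show ¬ ((s:ℕ) + m < i + m) by omega)]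
        congr 1; ext; simp
  right_inv := by
    intro k
    have := k.isLt
    by_cases h1 : (k : ℕ) < i
    · simp only [dif_pos h1]
      simp [h1]
    · by_cases h2 : (k : ℕ) < i + m
      · simp only [dif_neg h1, dif_pos h2]
        ext; simp; omega
      · simp only [dif_neg h1, dif_neg h2]
        simp only [if_neg (show ¬ ((k:ℕ) - m < i) by omega)]
        ext; simp; omega

def winE (σ : Type*) (i m n : ℕ) (h : i + m ≤ n) :
    (Fin n → σ) ≃ (Fin m → σ) × (Fin (n - m) → σ) :=
  (Equiv.arrowCongr (finWinEquiv i m n h).symm (Equiv.refl σ)).trans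
      (Equiv.sumArrowEquivProdArrow _ _ σ)

lemma winE_fst {σ : Type*} {i m n : ℕ} (h : i + m ≤ n) (w : Fin n → σ) :
    (winE σ i m n h w).1 = fun t : Fin m => w ⟨i + t, by omega⟩ := rfl

def prodSub {A B : Type*} (Q : A → Prop) : {p : A × B // Q p.1} ≃ {a // Q a} × B where
  toFun p := (⟨p.1.1, p.2⟩, p.1.2)
  invFun x := ⟨(x.1.1, x.2), x.1.2⟩
  left_inv p := rfl
  right_inv x := rfl

lemma card_window {σ : Type*} [Fintype σ] (Q : List σ → Prop) (n i m : ℕ) (h : i + m ≤ n) :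
    Nat.card {w : Fin n → σ // Q (subword (List.ofFn w) i (i + m))} =
      Nat.card {v : Fin m → σ // Q (List.ofFn v)} * Fintype.card σ ^ (n - m) := by
  classical
  have e2 : {w : Fin n → σ // Q (subword (List.ofFn w) i (i + m))} ≃
      {p : (Fin m → σ) × (Fin (n - m) → σ) // Q (List.ofFn p.1)} :=
    Equiv.subtypeEquiv (winE σ i m n h) (fun w => by rw [subword_ofFn h, ← winE_fst h w])
  rw [Nat.card_congr (e2.trans (prodSub (fun v : Fin m → σ => Q (List.ofFn v)))), Nat.card_prod]
  congr 1
  simp [Nat.card_eq_fintype_card]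

lemma expDensity_eq {α : Type*} (V : List α) (σ : Type*) [Fintype σ]
    (hq : 1 ≤ Fintype.card σ) (n : ℕ) :
    expDensity V σ n =
      (∑ p ∈ (Finset.range (n+1) ×ˢ Finset.range (n+1)).filter (fun p => p.1 < p.2),
        instProb V σ (p.2 - p.1)) / ((n+1).choose 2 : ℝ) := by
  classical
  have hq0 : (0:ℝ) < (Fintype.card σ : ℝ) := by
    have : (0:ℕ) < Fintype.card σ := hq
    exact_mod_cast this
  set S := (Finset.range (n+1) ×ˢ Finset.range (n+1)) with hS
  have key : ∀ p ∈ S.filter (fun p : ℕ×ℕ => p.1 < p.2),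
      ((Nat.card {w : Fin n → σ // p.1 < p.2 ∧ IsInstance V (subword (List.ofFn w) p.1 p.2)}) : ℝ)
        = instProb V σ (p.2 - p.1) * (Fintype.card σ : ℝ)^n := by
    rintro ⟨i,j⟩ hp
    simp only [Finset.mem_filter, hS, Finset.mem_product, Finset.mem_range] at hp
    obtain ⟨⟨hi, hj⟩, hij⟩ := hp
    have h1 : i + (j - i) ≤ n := by omega
    have h2 : j = i + (j - i) := by omega
    have e : {w : Fin n → σ // i < j ∧ IsInstance V (subword (List.ofFn w) i j)} ≃
        {w : Fin n → σ // IsInstance V (subword (List.ofFn w) i (i + (j-i)))} :=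
      Equiv.subtypeEquiv (Equiv.refl _) (fun w => by rw [← h2]; simp [hij])
    rw [Nat.card_congr e, card_window (IsInstance V) n i (j-i) h1]
    rw [instProb]
    have hpow : (Fintype.card σ:ℝ)^n = (Fintype.card σ:ℝ)^(j-i) * (Fintype.card σ:ℝ)^(n-(j-i)) := by
      rw [← pow_add]; congr 1; omega
    rw [hpow]
    push_cast
    field_simp
  have hden : ∀ w : Fin n → σ, density V (List.ofFn w)
      = (∑ p ∈ S, if p.1 < p.2 ∧ IsInstance V (subword (List.ofFn w) p.1 p.2) then (1:ℝ) else 0)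
        / ((n+1).choose 2 : ℝ) := by
    intro w
    rw [density]
    simp only [List.length_ofFn]
    rw [Finset.sum_boole]
  rw [expDensity]
  simp only [hden]
  rw [← Finset.sum_div, div_div, mul_comm, ← div_div]
  congr 1
  rw [Finset.sum_comm]
  have hinner : ∀ p ∈ S, (∑ w : Fin n → σ,
      if p.1 < p.2 ∧ IsInstance V (subword (List.ofFn w) p.1 p.2) then (1:ℝ) else 0)
      = ((Nat.card {w : Fin n → σ // p.1 < p.2 ∧ IsInstance V (subword (List.ofFn w) p.1 p.2)}) : ℝ) := by
    intro p _
    rw [Finset.sum_boole, Nat.card_eq_fintype_card, Fintype.card_subtype]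
  rw [Finset.sum_congr rfl hinner]
  rw [div_eq_iff (ne_of_gt (pow_pos hq0 n)), Finset.sum_mul]
  rw [← Finset.sum_filter_of_ne (p := fun p : ℕ×ℕ => p.1 < p.2)
      (f := fun p => ((Nat.card {w : Fin n → σ // p.1 < p.2 ∧ IsInstance V (subword (List.ofFn w) p.1 p.2)}) : ℝ))]
  · exact Finset.sum_congr rfl (fun p hp => by rw [key p hp])
  · intro p _ hne
    by_contra hlt
    apply hne
    have : IsEmpty {w : Fin n → σ // p.1 < p.2 ∧ IsInstance V (subword (List.ofFn w) p.1 p.2)} :=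
      ⟨fun w => hlt w.2.1⟩
    simp [Nat.card_of_isEmpty]

lemma flatten_eq_of_lengths {σ : Type*} : ∀ (L1 L2 : List (List σ)),
    L1.map List.length = L2.map List.length → L1.flatten = L2.flatten → L1 = L2
  | [], [], _, _ => rfl
  | [], _ :: _, h, _ => by simp at h
  | _ :: _, [], h, _ => by simp at h
  | a :: L1, b :: L2, h, hf => by
    simp only [List.map_cons, List.cons.injEq] at h
    simp only [List.flatten_cons] at hf
    obtain ⟨hab, hrest⟩ := List.append_inj hf h.1
    rw [hab, flatten_eq_of_lengths L1 L2 h.2 hrest]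

lemma doubled_sum_le {α : Type*} [DecidableEq α] (V : List α) (hV : Doubled V) (f : α → ℕ) :
    2 * (V.dedup.map f).sum ≤ (V.map f).sum := by
  have h1 : (V.map f).sum = ∑ a ∈ V.toFinset, V.count a * f a := by
    rw [Finset.sum_list_map_count]
    simp [smul_eq_mul]
  have h2 : V.toFinset = V.dedup.toFinset := by ext a; simp [List.mem_dedup]
  have h3 : ∀ g : α → ℕ, (∑ a ∈ V.toFinset, g a) = (V.dedup.map g).sum := by
    intro g
    rw [h2, List.sum_toFinset g (List.nodup_dedup V)]
  rw [h1, h3]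
  have : (V.dedup.map fun a => 2 * f a).sum = 2 * (V.dedup.map f).sum := by
    induction V.dedup with
    | nil => simp
    | cons a l ih => simp [ih]; ring
  rw [← this]
  apply List.sum_le_sum
  intro a ha
  have haV : a ∈ V := List.mem_dedup.mp ha
  have := hV a haV
  nlinarith [Nat.zero_le (f a)]

set_option synthInstance.maxHeartbeats 1000000 in
lemma card_inst_doubled {α σ : Type*} [DecidableEq α] [Fintype σ] (V : List α) (hV : Doubled V)
    (s0 : σ) (m : ℕ) :
    Nat.card {w : Fin m → σ // IsInstance V (List.ofFn w)}
      ≤ (m / 2 + 1) ^ V.toFinset.card * Fintype.card σ ^ (m / 2) := by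
  classical
  set s := m / 2 with hs
  have main : ∀ w : {w : Fin m → σ // IsInstance V (List.ofFn w)},
      ∃ φ : α → List σ, (∀ a, φ a ≠ []) ∧ List.ofFn w.1 = (V.map φ).flatten := fun w => w.2
  choose φ hne hflat using main
  have hlen : ∀ w, (V.map fun a => (φ w a).length).sum = m := by
    intro w
    have := congrArg List.length (hflat w)
    simp only [List.length_ofFn, List.length_flatten, List.map_map] at this
    exact this.symm
  have hsum : ∀ w, (V.dedup.map fun a => (φ w a).length).sum ≤ s := by
    intro w
    have h2 := doubled_sum_le V hV fun a => (φ w a).length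
    rw [hlen w] at h2
    omega
  have hone : ∀ w (a : α), a ∈ V → (φ w a).length ≤ s := by
    intro w a ha
    have hmem : (φ w a).length ∈ V.dedup.map fun a => (φ w a).length :=
      List.mem_map.mpr ⟨a, List.mem_dedup.mpr ha, rfl⟩
    have := List.single_le_sum (l := V.dedup.map fun a => (φ w a).length)
      (fun x _ => Nat.zero_le x) _ hmem
    exact le_trans this (hsum w)
  set flat : {w : Fin m → σ // IsInstance V (List.ofFn w)} → List σ :=
    fun w => (V.dedup.map (φ w)).flatten with hflatdef
  have hflen : ∀ w, (flat w).length ≤ s := by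
    intro w
    rw [hflatdef]
    simp only [List.length_flatten, List.map_map]
    exact hsum w
  set F : {w : Fin m → σ // IsInstance V (List.ofFn w)} →
      ({x // x ∈ V.toFinset} → Fin (s + 1)) × (Fin s → σ) :=
    fun w => (fun a => ⟨(φ w a.1).length, by
        have := hone w a.1 (List.mem_toFinset.mp a.2); omega⟩,
      fun i => if hlt : (i : ℕ) < (flat w).length then (flat w).get ⟨i, hlt⟩ else s0) with hF
  have hinj : Function.Injective F := by
    intro w1 w2 hFeq
    have h1 : ∀ a ∈ V, (φ w1 a).length = (φ w2 a).length := by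
      intro a ha
      have := congrFun (congrArg Prod.fst hFeq) ⟨a, List.mem_toFinset.mpr ha⟩
      simpa using congrArg Fin.val this
    have hlens : (V.dedup.map (φ w1)).map List.length = (V.dedup.map (φ w2)).map List.length := by
      simp only [List.map_map]
      exact List.map_congr_left fun a ha => h1 a (List.mem_dedup.mp ha)
    have hfl : (flat w1).length = (flat w2).length := by
      rw [hflatdef]
      simp only [List.length_flatten]
      rw [hlens]
    have hflats : flat w1 = flat w2 := by
      apply List.ext_getElem hfl
      intro k hk1 hk2
      have hk : k < s := lt_of_lt_of_le hk1 (hflen w1)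
      have := congrFun (congrArg Prod.snd hFeq) ⟨k, hk⟩
      simp only [hF, dif_pos hk1, dif_pos hk2] at this
      simpa using this
    have hmaps : V.dedup.map (φ w1) = V.dedup.map (φ w2) :=
      flatten_eq_of_lengths _ _ hlens hflats
    have hphi : ∀ a ∈ V, φ w1 a = φ w2 a := by
      intro a ha
      exact List.map_inj_left.mp hmaps a (List.mem_dedup.mpr ha)
    have : List.ofFn w1.1 = List.ofFn w2.1 := by
      rw [hflat w1, hflat w2, List.map_congr_left hphi]
    exact Subtype.ext (List.ofFn_injective this)
  calc Nat.card {w : Fin m → σ // IsInstance V (List.ofFn w)}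
      ≤ Nat.card (({x // x ∈ V.toFinset} → Fin (s + 1)) × (Fin s → σ)) :=
        Nat.card_le_card_of_injective F hinj
    _ = (s + 1) ^ V.toFinset.card * Fintype.card σ ^ s := by
        simp [Nat.card_eq_fintype_card, Fintype.card_fun]
        refine Or.inl ?_
        congr 1
        rw [Fintype.card_congr (Equiv.subtypeEquivRight
          (fun x => (List.mem_toFinset (a := x) (l := V)).symm)), Fintype.card_coe]

lemma instProb_nonneg {α : Type*} (V : List α) (σ : Type*) [Fintype σ] (m : ℕ) :
    0 ≤ instProb V σ m := by
  unfold instProb; positivity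

lemma instProb_le_one {α : Type*} (V : List α) (σ : Type*) [Fintype σ]
    (hq : 1 ≤ Fintype.card σ) (m : ℕ) : instProb V σ m ≤ 1 := by
  have hq0 : (0:ℝ) < (Fintype.card σ : ℝ) ^ m := by
    have : (0:ℕ) < Fintype.card σ := hq
    positivity
  rw [instProb, div_le_one hq0]
  have h1 : Nat.card {w : Fin m → σ // IsInstance V (List.ofFn w)} ≤ Nat.card (Fin m → σ) :=
    Nat.card_le_card_of_injective Subtype.val Subtype.coe_injective
  have h2 : Nat.card (Fin m → σ) = Fintype.card σ ^ m := by
    simp [Nat.card_eq_fintype_card]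
  rw [h2] at h1
  exact_mod_cast h1

lemma nondoubled_decomp {α : Type*} [DecidableEq α] {V : List α} (h : ¬ Doubled V) :
    ∃ (X : List α) (a : α) (Y : List α), V = X ++ a :: Y ∧ a ∉ X ∧ a ∉ Y := by
  rw [Doubled] at h
  push_neg at h
  obtain ⟨a, haV, hc⟩ := h
  obtain ⟨X, Y, rfl⟩ := List.append_of_mem haV
  refine ⟨X, a, Y, rfl, ?_, ?_⟩ <;>
  · intro hmem
    have h1 : 1 ≤ X.count a + Y.count a := by
      rcases List.count_pos_iff.mpr hmem with h
      first
        | exact le_trans h (Nat.le_add_right _ _)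
        | exact le_trans h (Nat.le_add_left _ _)
    simp [List.count_append, List.count_cons_self] at hc
    omega

lemma replicate_flatten {α σ : Type*} (l : List α) (f : α → List σ) (c : σ)
    (h : ∀ b ∈ l, f b = [c]) : (l.map f).flatten = List.replicate l.length c := by
  induction l with
  | nil => simp
  | cons x t ih =>
    simp only [List.map_cons, List.flatten_cons, List.length_cons, List.replicate_succ]
    rw [h x List.mem_cons_self, ih (fun b hb => h b (List.mem_cons_of_mem x hb))]
    rfl

lemma card_inst_nondoubled {α σ : Type*} [DecidableEq α] [Fintype σ] (X Y : List α) (a : α)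
    (s0 : σ) (hX : a ∉ X) (hY : a ∉ Y) (m : ℕ) (hm : (X ++ a :: Y).length ≤ m) :
    Fintype.card σ ^ (m - (X ++ a :: Y).length + 1)
      ≤ Nat.card {w : Fin m → σ // IsInstance (X ++ a :: Y) (List.ofFn w)} := by
  classical
  set V := X ++ a :: Y with hV
  have hL : V.length = X.length + Y.length + 1 := by simp [hV]; omega
  set mid := m - V.length + 1 with hmid
  have hmid1 : 1 ≤ mid := by omega
  have hWlen : ∀ u : Fin mid → σ,
      (List.replicate X.length s0 ++ List.ofFn u ++ List.replicate Y.length s0).length = m := by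
    intro u; simp; omega
  set G : (Fin mid → σ) → (Fin m → σ) := fun u k =>
    (List.replicate X.length s0 ++ List.ofFn u ++ List.replicate Y.length s0).get
      ⟨k, by rw [hWlen]; exact k.isLt⟩ with hG
  have hofFn : ∀ u, List.ofFn (G u)
      = List.replicate X.length s0 ++ List.ofFn u ++ List.replicate Y.length s0 := by
    intro u
    apply List.ext_getElem (by simp only [List.length_ofFn]; exact (hWlen u).symm)
    intro k h1 h2
    simp [hG]
  have hmidword : ∀ u : Fin mid → σ,
      ((List.replicate X.length s0 ++ List.ofFn u ++ List.replicate Y.length s0).drop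
        X.length).take mid = List.ofFn u := by
    intro u
    rw [List.append_assoc, List.drop_left' (by simp), List.take_left' (by rw [List.length_ofFn])]
  have hinst : ∀ u, IsInstance V (List.ofFn (G u)) := by
    intro u
    refine ⟨fun b => if b = a then List.ofFn u else [s0], ?_, ?_⟩
    · intro b
      by_cases hb : b = a
      · simp only [if_pos hb]
        intro hnil
        have := congrArg List.length hnil
        simp at this
      · simp [hb]
    · rw [hofFn u, hV]
      simp only [List.map_append, List.map_cons, List.flatten_append, List.flatten_cons,
        if_pos rfl]
      rw [replicate_flatten X _ s0 (fun b hb => if_neg (fun hba : b = a => hX (hba ▸ hb))),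
        replicate_flatten Y _ s0 (fun b hb => if_neg (fun hba : b = a => hY (hba ▸ hb)))]
      simp [List.append_assoc]
  set G' : (Fin mid → σ) → {w : Fin m → σ // IsInstance V (List.ofFn w)} :=
    fun u => ⟨G u, hinst u⟩ with hG'
  have hinj : Function.Injective G' := by
    intro u1 u2 h12
    have hW : List.ofFn (G u1) = List.ofFn (G u2) := by
      rw [congrArg (fun x => List.ofFn x.1) h12]
    rw [hofFn u1, hofFn u2] at hW
    have := congrArg (fun l : List σ => (l.drop X.length).take mid) hW
    rw [hmidword u1, hmidword u2] at this
    exact List.ofFn_injective this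
  have hcard := Nat.card_le_card_of_injective G' hinj
  have : Nat.card (Fin mid → σ) = Fintype.card σ ^ mid := by
    simp [Nat.card_eq_fintype_card]
  omega

lemma expDensity_nonneg {α : Type*} (V : List α) (σ : Type*) [Fintype σ] (n : ℕ) :
    0 ≤ expDensity V σ n := by
  apply div_nonneg _ (by positivity)
  apply Finset.sum_nonneg
  intro w _
  unfold density
  positivity


/-- **The Dichotomy.** Let `V` be a word over any alphabet, `Σ` a finite
alphabet with `q ≥ 2` letters, and `W_n ∈ Σ^n` chosen uniformly at random.
Then `V` is doubled iff `lim_{n→∞} E(δ(V, W_n)) = 0`. -/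
theorem stmt0 {α σ : Type*} [DecidableEq α] [Fintype σ] (V : List α)
    (hq : 2 ≤ Fintype.card σ) :
    Doubled V ↔ Tendsto (fun n => expDensity V σ n) atTop (nhds 0) := by
  classical
  have hq1 : 1 ≤ Fintype.card σ := by omega
  have hq0 : (0:ℝ) < (Fintype.card σ : ℝ) := by exact_mod_cast Nat.lt_of_lt_of_le one_pos hq1
  have hqR : (1:ℝ) < (Fintype.card σ : ℝ) := by exact_mod_cast hq
  obtain ⟨s0⟩ : Nonempty σ := Fintype.card_pos_iff.mp (by omega)
  set q : ℝ := (Fintype.card σ : ℝ) with hqdef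
  constructor
  · -- Doubled → tendsto 0
    intro hD
    set K := V.toFinset.card with hK
    -- instProb bound
    have hbound : ∀ m : ℕ, instProb V σ m ≤ ((m/2 : ℕ) + 1 : ℝ) ^ K * (q⁻¹) ^ (m/2) := by
      intro m
      have hN := card_inst_doubled V hD s0 m
      have h1 : instProb V σ m ≤ (((m/2 + 1) ^ K * Fintype.card σ ^ (m/2) : ℕ) : ℝ) / q ^ m := by
        unfold instProb
        apply div_le_div_of_nonneg_right _ (by positivity)
        · exact_mod_cast hN
      refine le_trans h1 ?_
      push_cast
      rw [div_le_iff₀ (by positivity)]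
      have hle : (m/2 : ℕ) ≤ m - m/2 := by omega
      have hqm : q ^ m = q ^ (m/2) * q ^ (m - m/2) := by
        rw [← pow_add]; congr 1; omega
      rw [hqm]
      have hpow : q ^ (m/2) ≤ q ^ (m - m/2) := pow_le_pow_right₀ (le_of_lt hqR) hle
      have hnn : (0:ℝ) ≤ ((m/2 : ℕ) + 1 : ℝ) ^ K := by positivity
      calc ((m/2 : ℕ) + 1 : ℝ) ^ K * q ^ (m/2)
          ≤ ((m/2 : ℕ) + 1 : ℝ) ^ K * q ^ (m - m/2) := by
            apply mul_le_mul_of_nonneg_left hpow hnn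
        _ = ((m/2 : ℕ) + 1 : ℝ) ^ K * q⁻¹ ^ (m/2) * (q ^ (m/2) * q ^ (m - m/2)) := by
            have hqne : q ≠ 0 := ne_of_gt hq0
            rw [← mul_assoc, mul_assoc _ (q⁻¹ ^ (m/2)), ← mul_pow, inv_mul_cancel₀ hqne, one_pow, mul_one]
    -- tendsto of the bound
    have hg : Tendsto (fun t : ℕ => ((t:ℝ) + 1) ^ K * (q⁻¹) ^ t) atTop (nhds 0) := by
      have h0 : Tendsto (fun t : ℕ => (t:ℝ) ^ K * (q⁻¹) ^ t) atTop (nhds 0) :=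
        tendsto_pow_const_mul_const_pow_of_lt_one K (by positivity) (by
          rw [inv_lt_one_iff₀]; right; exact hqR)
      have h1 := h0.comp (tendsto_add_atTop_nat 1)
      have h3 := h1.const_mul q
      rw [mul_zero] at h3
      apply h3.congr
      intro t
      have hqne : q ≠ 0 := ne_of_gt hq0
      simp only [Function.comp]
      push_cast
      rw [pow_succ]
      field_simp
    have hdiv : Tendsto (fun m : ℕ => m / 2) atTop atTop := by
      apply tendsto_atTop_atTop.mpr
      intro b
      exact ⟨2 * b, fun a ha => by omega⟩
    have hcomp : Tendsto (fun m : ℕ => (((m/2 : ℕ) : ℝ) + 1) ^ K * (q⁻¹) ^ (m/2))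
        atTop (nhds 0) := hg.comp hdiv
    have hp0 : Tendsto (fun m => instProb V σ m) atTop (nhds 0) :=
      squeeze_zero (fun m => instProb_nonneg V σ m) hbound hcomp
    -- Cesàro
    have hces := hp0.cesaro
    have hces1 := hces.comp (tendsto_add_atTop_nat 1)
    have hces4 := hces1.const_mul (4:ℝ)
    rw [mul_zero] at hces4
    have hces4' : Tendsto (fun n : ℕ =>
        4 * (((n:ℝ)+1)⁻¹ * ∑ i ∈ Finset.range (n+1), instProb V σ i)) atTop (nhds 0) := by
      apply hces4.congr
      intro n
      simp only [Function.comp]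
      push_cast
      ring
    -- squeeze expDensity
    apply squeeze_zero' (Filter.Eventually.of_forall (fun n => expDensity_nonneg V σ n))
      _ hces4'
    filter_upwards [Filter.eventually_ge_atTop 1] with n hn
    rw [expDensity_eq V σ hq1 n]
    set Sn := ∑ i ∈ Finset.range (n+1), instProb V σ i with hSn
    have hSn0 : 0 ≤ Sn := Finset.sum_nonneg fun i _ => instProb_nonneg V σ i
    have hF : (∑ p ∈ (Finset.range (n+1) ×ˢ Finset.range (n+1)).filter (fun p => p.1 < p.2),
        instProb V σ (p.2 - p.1)) ≤ (n+1 : ℝ) * Sn := by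
      rw [Finset.sum_filter, Finset.sum_product]
      have hinner : ∀ i ∈ Finset.range (n+1),
          (∑ j ∈ Finset.range (n+1), if i < j then instProb V σ (j - i) else 0) ≤ Sn := by
        intro i _
        rw [← Finset.sum_filter]
        set T := (Finset.range (n+1)).filter (fun j => i < j) with hT
        have himg : ∑ j ∈ T, instProb V σ (j - i) = ∑ m ∈ T.image (fun j => j - i),
            instProb V σ m := by
          rw [Finset.sum_image]
          intro x hx y hy hxy
          simp [hT, Finset.mem_filter] at hx hy
          simp only at hxy
          omega
        rw [himg]
        apply Finset.sum_le_sum_of_subset_of_nonneg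
        · intro m hm
          simp only [Finset.mem_image, hT, Finset.mem_filter, Finset.mem_range] at hm
          obtain ⟨j, ⟨hj, _⟩, rfl⟩ := hm
          simp only [Finset.mem_range]
          omega
        · intro m _ _
          exact instProb_nonneg V σ m
      calc (∑ i ∈ Finset.range (n+1), ∑ j ∈ Finset.range (n+1),
            if i < j then instProb V σ (j - i) else 0)
          ≤ ∑ _i ∈ Finset.range (n+1), Sn := Finset.sum_le_sum hinner
        _ = (n+1 : ℝ) * Sn := by
            rw [Finset.sum_const, Finset.card_range]
            push_cast
            ring
    have hdvd : 2 ∣ (n+1) * n := by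
      rcases Nat.even_or_odd n with h | h
      · exact Dvd.dvd.mul_left h.two_dvd _
      · exact Dvd.dvd.mul_right (Odd.add_one h).two_dvd _
    have h2C : 2 * ((n+1).choose 2) = (n+1) * n := by
      rw [Nat.choose_two_right, Nat.succ_sub_one, Nat.mul_div_cancel' hdvd]
    have hC : ((n+1:ℝ)) * (n+1) ≤ 4 * ((n+1).choose 2 : ℝ) := by
      have : (n+1) * (n+1) ≤ 4 * ((n+1).choose 2) := by nlinarith [h2C, hn]
      exact_mod_cast this
    have hC0 : (0:ℝ) < ((n+1).choose 2 : ℝ) := by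
      have : 0 < (n+1).choose 2 := Nat.choose_pos (by omega)
      exact_mod_cast this
    have hn1 : (0:ℝ) < (n+1 : ℝ) := by positivity
    rw [div_le_iff₀ hC0]
    calc (∑ p ∈ (Finset.range (n+1) ×ˢ Finset.range (n+1)).filter (fun p => p.1 < p.2),
          instProb V σ (p.2 - p.1))
        ≤ (n+1 : ℝ) * Sn := hF
      _ ≤ 4 * (((n:ℝ)+1)⁻¹ * Sn) * ((n+1).choose 2 : ℝ) := by
          have heq : 4 * (((n:ℝ)+1)⁻¹ * Sn) * ((n+1).choose 2 : ℝ)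
              = 4 * Sn * ((n+1).choose 2 : ℝ) / ((n:ℝ)+1) := by
            field_simp
          rw [heq, le_div_iff₀ hn1]
          nlinarith [hSn0, hC]
  · -- tendsto 0 → Doubled
    intro ht
    by_contra hD
    obtain ⟨X, a, Y, hVeq, hX, hY⟩ := nondoubled_decomp hD
    set L := V.length with hL
    have hL1 : 1 ≤ L := by rw [hL, hVeq]; simp; omega
    set c : ℝ := 1 / q ^ (L - 1) with hc
    have hc0 : 0 < c := by rw [hc]; positivity
    have hlow : ∀ m, L ≤ m → c ≤ instProb V σ m := by
      intro m hm
      have hN := card_inst_nondoubled X Y a s0 hX hY m (by rw [← hVeq, ← hL]; exact hm)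
      rw [← hVeq] at hN
      have h1 : ((Fintype.card σ ^ (m - L + 1) : ℕ) : ℝ) / q ^ m ≤ instProb V σ m := by
        unfold instProb
        apply div_le_div_of_nonneg_right _ (by positivity)
        · rw [hL, hVeq] at *
          exact_mod_cast hN
      refine le_trans (le_of_eq ?_) h1
      push_cast
      rw [hc]
      have : q ^ m = q ^ (m - L + 1) * q ^ (L - 1) := by
        rw [← pow_add]; congr 1; omega
      rw [this]
      field_simp
      rfl
    -- eventual lower bound on expDensity
    have hev : ∀ᶠ n in atTop, c / 64 ≤ expDensity V σ n := by
      filter_upwards [Filter.eventually_ge_atTop (2*L + 2)] with n hn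
      set N := (n + 1 - L) / 2 with hN
      have h8 : n + 1 ≤ 8 * N := by omega
      have hN0 : 0 < N := by omega
      set B := Finset.range N ×ˢ Finset.Ico (N + L) (N + L + N) with hB
      have hBsub : B ⊆ (Finset.range (n+1) ×ˢ Finset.range (n+1)).filter
          (fun p => p.1 < p.2) := by
        intro p hp
        simp only [hB, Finset.mem_product, Finset.mem_range, Finset.mem_Ico] at hp
        simp only [Finset.mem_filter, Finset.mem_product, Finset.mem_range]
        omega
      rw [expDensity_eq V σ hq1 n]
      have hsumB : c * N ^ 2 ≤ ∑ p ∈ B, instProb V σ (p.2 - p.1) := by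
        have hcard : B.card = N * N := by
          simp [hB, Nat.Ico_eq_range', Finset.card_product]
        have := Finset.card_nsmul_le_sum B (fun p => instProb V σ (p.2 - p.1)) c
          (fun p hp => by
            apply hlow
            simp only [hB, Finset.mem_product, Finset.mem_range, Finset.mem_Ico] at hp
            omega)
        rw [hcard] at this
        calc c * N ^ 2 = (N * N) • c := by
              rw [nsmul_eq_mul]
              push_cast
              ring
          _ ≤ _ := this
      have hsumF : (∑ p ∈ B, instProb V σ (p.2 - p.1)) ≤
          ∑ p ∈ (Finset.range (n+1) ×ˢ Finset.range (n+1)).filter (fun p => p.1 < p.2),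
            instProb V σ (p.2 - p.1) :=
        Finset.sum_le_sum_of_subset_of_nonneg hBsub
          (fun p _ _ => instProb_nonneg V σ _)
      have hdvd : 2 ∣ (n+1) * n := by
        rcases Nat.even_or_odd n with h | h
        · exact Dvd.dvd.mul_left h.two_dvd _
        · exact Dvd.dvd.mul_right (Odd.add_one h).two_dvd _
      have h2C : 2 * ((n+1).choose 2) = (n+1) * n := by
        rw [Nat.choose_two_right, Nat.succ_sub_one, Nat.mul_div_cancel' hdvd]
      have hCle : ((n+1).choose 2 : ℝ) ≤ 64 * N ^ 2 := by
        have hnn : n ≤ 8 * N := by omega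
        have : (n+1).choose 2 ≤ 64 * N ^ 2 := by nlinarith [h2C, h8, hnn]
        exact_mod_cast this
      have hC0 : (0:ℝ) < ((n+1).choose 2 : ℝ) := by
        have : 0 < (n+1).choose 2 := Nat.choose_pos (by omega)
        exact_mod_cast this
      calc c / 64 = c * N ^ 2 / (64 * N ^ 2) := by
            have hNne : (N:ℝ) ≠ 0 := by positivity
            field_simp
        _ ≤ c * N ^ 2 / ((n+1).choose 2 : ℝ) := by
            apply div_le_div_of_nonneg_left (by positivity) hC0 hCle
        _ ≤ _ :=
            div_le_div_of_nonneg_right (le_trans hsumB hsumF) hC0.le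
    have := ge_of_tendsto ht hev
    linarith
end

section
/- Let V be a nondoubled word (i.e., some letter occurs exactly once in V), let Σ be a finite alphabet with q ≥ 2 letters, and let W_n ∈ Σ^n be chosen uniformly at random. Then for all n > |V|, E(δ(V,W_n)) ≥ q^{-||V||} · C(n − |V| + 1, 2)/C(n+1, 2); in particular, liminf_{n→∞} E(δ(V,W_n)) ≥ q^{-||V||} > 0. -/
open Filter Asymptotics

lemma flatten_map_singleton {α σ : Type*} (g : α → σ) (P : List α) (φ : α → List σ)
    (h : ∀ b ∈ P, φ b = [g b]) : (P.map φ).flatten = P.map g := by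
  induction P with
  | nil => simp
  | cons b t ih =>
      simp only [List.map_cons, List.flatten_cons, h b (by simp),
        ih (fun x hx => h x (by simp [hx]))]
      rfl

lemma ofFn_get_cast {σ : Type*} {l : List σ} {n : ℕ} (h : l.length = n) :
    List.ofFn (fun k : Fin n => l.get (Fin.cast h.symm k)) = l := by
  subst h; exact List.ofFn_get l

open Classical in
lemma window_count {α σ : Type*} [DecidableEq α] [Fintype σ] (V : List α) (a : α)
    (P S : List α) (hVps : V = P ++ a :: S) (haP : a ∉ P) (haS : a ∉ S) (z : σ)
    (n i j : ℕ) (hij : i < j) (hjn : j ≤ n) (hm : V.length ≤ j - i) :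
    (Fintype.card σ) ^ (n - (V.length - V.toFinset.card)) ≤
      (Finset.univ.filter (fun w : Fin n → σ =>
        IsInstance V (subword (List.ofFn w) i j))).card := by
  classical
  set L := V.length with hL
  set d := V.toFinset.card with hd
  set m := j - i with hmdef
  have haV : a ∈ V := by rw [hVps]; simp
  have hdL : d ≤ L := V.toFinset_card_le
  have hd1 : 1 ≤ d := Finset.card_pos.mpr ⟨a, List.mem_toFinset.mpr haV⟩
  have hPS : P.length + 1 + S.length = L := by rw [hL, hVps]; simp; omega
  -- domain
  set E := V.toFinset.erase a with hE
  let D := ({b // b ∈ E} → σ) × (Fin (m - L + 1) → σ) × (Fin i → σ) × (Fin (n - j) → σ)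
  let g' : ({b // b ∈ E} → σ) → α → σ := fun g b => if h : b ∈ E then g ⟨b, h⟩ else z
  let Wl : D → List σ := fun t => P.map (g' t.1) ++ List.ofFn t.2.1 ++ S.map (g' t.1)
  have hWl_len : ∀ t : D, (Wl t).length = m := by
    intro t; simp [Wl]; omega
  let Wf : D → List σ := fun t => List.ofFn t.2.2.1 ++ Wl t ++ List.ofFn t.2.2.2
  have hWf_len : ∀ t : D, (Wf t).length = n := by
    intro t; simp [Wf, hWl_len t]; omega
  let F : D → (Fin n → σ) := fun t k => (Wf t).get (Fin.cast (hWf_len t).symm k)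
  have hofFn : ∀ t : D, List.ofFn (F t) = Wf t := fun t => ofFn_get_cast (hWf_len t)
  have hsub : ∀ t : D, subword (List.ofFn (F t)) i j = Wl t := by
    intro t
    rw [hofFn t]
    unfold subword
    rw [show Wf t = List.ofFn t.2.2.1 ++ (Wl t ++ List.ofFn t.2.2.2) by
      simp [Wf, List.append_assoc]]
    rw [List.drop_left' (by simp), List.take_left' (by rw [hWl_len t])]
  have hInst : ∀ t : D, IsInstance V (subword (List.ofFn (F t)) i j) := by
    intro t
    rw [hsub t]
    refine ⟨fun b => if b = a then List.ofFn t.2.1 else [g' t.1 b], ?_, ?_⟩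
    · intro b
      by_cases hb : b = a <;> simp [hb]
    · rw [hVps]
      simp only [List.map_append, List.map_cons, List.flatten_append, List.flatten_cons,
        if_pos rfl]
      rw [flatten_map_singleton (g' t.1) P _ (fun b hb => by
            rw [if_neg (by rintro rfl; exact haP hb)]),
          flatten_map_singleton (g' t.1) S _ (fun b hb => by
            rw [if_neg (by rintro rfl; exact haS hb)])]
      simp [Wl, List.append_assoc]
  have hFinj : Function.Injective F := by
    intro t t' h
    have hWfeq : Wf t = Wf t' := by rw [← hofFn t, ← hofFn t', h]
    have hWfeq' : (List.ofFn t.2.2.1 ++ Wl t) ++ List.ofFn t.2.2.2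
        = (List.ofFn t'.2.2.1 ++ Wl t') ++ List.ofFn t'.2.2.2 := hWfeq
    obtain ⟨h2, hy⟩ := List.append_inj hWfeq' (by simp [hWl_len])
    obtain ⟨hx, hWleq⟩ := List.append_inj h2 (by simp)
    have hWleq' : (List.map (g' t.1) P ++ List.ofFn t.2.1) ++ List.map (g' t.1) S
        = (List.map (g' t'.1) P ++ List.ofFn t'.2.1) ++ List.map (g' t'.1) S := hWleq
    obtain ⟨h5, hS⟩ := List.append_inj hWleq' (by simp)
    obtain ⟨hP, hu⟩ := List.append_inj h5 (by simp)
    have hg : t.1 = t'.1 := by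
      funext b
      obtain ⟨b, hb⟩ := b
      have hbne : b ≠ a := (Finset.mem_erase.mp hb).1
      have hbV : b ∈ V := List.mem_toFinset.mp (Finset.mem_erase.mp hb).2
      have hbPS : b ∈ P ∨ b ∈ S := by
        rw [hVps] at hbV
        rcases List.mem_append.mp hbV with h | h
        · exact Or.inl h
        · rcases List.mem_cons.mp h with h | h
          · exact absurd h hbne
          · exact Or.inr h
      have : g' t.1 b = g' t'.1 b := by
        rcases hbPS with h | h
        · exact List.map_inj_left.mp hP b h
        · exact List.map_inj_left.mp hS b h
      simpa [g', dif_pos hb] using this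
    exact Prod.ext hg (Prod.ext (List.ofFn_inj.mp hu)
      (Prod.ext (List.ofFn_inj.mp hx) (List.ofFn_inj.mp hy)))
  have hcard : Fintype.card D ≤ (Finset.univ.filter (fun w : Fin n → σ =>
      IsInstance V (subword (List.ofFn w) i j))).card := by
    rw [← Fintype.card_subtype]
    exact Fintype.card_le_of_injective (fun t => ⟨F t, hInst t⟩)
      (fun t t' h => hFinj (congrArg Subtype.val h))
  refine le_trans (le_of_eq ?_) hcard
  have hcardD : Fintype.card D =
      (Fintype.card σ)^(d - 1) * ((Fintype.card σ)^(m - L + 1) *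
      ((Fintype.card σ)^i * (Fintype.card σ)^(n - j))) := by
    simp [D, Fintype.card_fun, hE, hd, Finset.card_erase_of_mem (List.mem_toFinset.mpr haV)]
  rw [hcardD, ← pow_add, ← pow_add, ← pow_add]
  congr 1
  omega

lemma tri_card (M : ℕ) :
    ((Finset.range M ×ˢ Finset.range M).filter fun p : ℕ × ℕ => p.1 < p.2).card
      = M.choose 2 := by
  have heq : ((Finset.range M ×ˢ Finset.range M).filter fun p : ℕ × ℕ => p.1 < p.2)
      = (Finset.range M).biUnion (fun j => (Finset.range j).image (fun i => (i, j))) := by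
    ext ⟨i, j⟩
    simp only [Finset.mem_filter, Finset.mem_product, Finset.mem_range,
      Finset.mem_biUnion, Finset.mem_image, Prod.mk.injEq]
    constructor
    · rintro ⟨⟨hi, hj⟩, hij⟩
      exact ⟨j, hj, i, hij, rfl, rfl⟩
    · rintro ⟨j', hj', i', hi', rfl, rfl⟩
      exact ⟨⟨hi'.trans hj', hj'⟩, hi'⟩
  rw [heq, Finset.card_biUnion]
  · have : ∀ j ∈ Finset.range M, ((Finset.range j).image (fun i => (i, j))).card = j := by
      intro j _
      rw [Finset.card_image_of_injective _ (fun x y h => (Prod.mk.injEq _ _ _ _).mp h |>.1)]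
      exact Finset.card_range j
    rw [Finset.sum_congr rfl this]
    have h2 := Finset.sum_range_id_mul_two M
    rw [Nat.choose_two_right]
    omega
  · intro x _ y _ hxy
    simp only [Finset.disjoint_left, Finset.mem_image, Finset.mem_range]
    rintro ⟨i, j⟩ ⟨i1, hi1, h1⟩ ⟨i2, hi2, h2⟩
    apply hxy
    rw [Prod.mk.injEq] at h1 h2
    omega

set_option maxHeartbeats 1000000 in
open Classical in
lemma key_count {α σ : Type*} [DecidableEq α] [Fintype σ] (V : List α) (a : α)
    (P S : List α) (hVps : V = P ++ a :: S) (haP : a ∉ P) (haS : a ∉ S) (z : σ)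
    (n : ℕ) (hn : V.length < n) :
    Nat.choose (n - V.length + 1) 2 *
        (Fintype.card σ) ^ (n - (V.length - V.toFinset.card)) ≤
      ∑ w : Fin n → σ, ((Finset.range (n+1) ×ˢ Finset.range (n+1)).filter
        (fun p => p.1 < p.2 ∧ IsInstance V (subword (List.ofFn w) p.1 p.2))).card := by
  classical
  set L := V.length with hL
  set q := Fintype.card σ with hq
  set k := L - V.toFinset.card with hk
  set f : ℕ × ℕ → ℕ := fun p => (Finset.univ.filter (fun w : Fin n → σ =>
    p.1 < p.2 ∧ IsInstance V (subword (List.ofFn w) p.1 p.2))).card with hf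
  have hswap : ∑ w : Fin n → σ, ((Finset.range (n+1) ×ˢ Finset.range (n+1)).filter
        (fun p => p.1 < p.2 ∧ IsInstance V (subword (List.ofFn w) p.1 p.2))).card
      = ∑ p ∈ Finset.range (n+1) ×ˢ Finset.range (n+1), f p := by
    simp_rw [hf, Finset.card_filter]
    rw [Finset.sum_comm]
  rw [hswap]
  set T := ((Finset.range (n - L + 1)) ×ˢ (Finset.range (n - L + 1))).filter
    (fun p : ℕ × ℕ => p.1 < p.2) with hT
  have hTcard : T.card = Nat.choose (n - L + 1) 2 := tri_card _
  set e : ℕ × ℕ → ℕ × ℕ := fun p => (p.1, p.2 + L) with he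
  have hinj : ∀ x ∈ T, ∀ y ∈ T, e x = e y → x = y := by
    intro x _ y _ hxy
    rw [Prod.ext_iff] at hxy ⊢
    simp only [he] at hxy
    omega
  have hbound : ∀ p ∈ T, q ^ (n - k) ≤ f (e p) := by
    intro p hp
    simp only [hT, Finset.mem_filter, Finset.mem_product, Finset.mem_range] at hp
    obtain ⟨⟨hp1, hp2⟩, hp12⟩ := hp
    have hlt : p.1 < p.2 + L := by omega
    have hfe : f (e p) = (Finset.univ.filter (fun w : Fin n → σ =>
        IsInstance V (subword (List.ofFn w) p.1 (p.2 + L)))).card := by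
      rw [hf, he]
      show (Finset.univ.filter (fun w : Fin n → σ =>
        p.1 < p.2 + L ∧ IsInstance V (subword (List.ofFn w) p.1 (p.2 + L)))).card = _
      congr 1
      apply Finset.filter_congr
      intro w _
      simp [hlt]
    rw [hfe]
    exact window_count V a P S hVps haP haS z n p.1 (p.2 + L) hlt (by omega) (by omega)
  calc Nat.choose (n - L + 1) 2 * q ^ (n - k)
      = ∑ _p ∈ T, q ^ (n - k) := by rw [Finset.sum_const, hTcard, smul_eq_mul]
    _ ≤ ∑ p ∈ T, f (e p) := Finset.sum_le_sum hbound
    _ = ∑ p ∈ T.image e, f p := (Finset.sum_image hinj).symm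
    _ ≤ _ := by
        apply Finset.sum_le_sum_of_subset
        intro p hp
        simp only [Finset.mem_image, hT, Finset.mem_filter, Finset.mem_product,
          Finset.mem_range] at hp
        obtain ⟨x, ⟨⟨h1, h2⟩, h3⟩, rfl⟩ := hp
        simp only [Finset.mem_product, Finset.mem_range, he]
        omega

lemma density_nonneg {α β : Type*} (V : List α) (W : List β) : 0 ≤ density V W := by
  unfold density; positivity

lemma density_le_one {α β : Type*} (V : List α) (W : List β) : density V W ≤ 1 := by
  classical
  unfold density
  apply div_le_one_of_le₀ _ (by positivity)
  have h1 : ((Finset.range (W.length + 1) ×ˢ Finset.range (W.length + 1)).filter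
      (fun p => p.1 < p.2 ∧ IsInstance V (subword W p.1 p.2))).card ≤
      ((Finset.range (W.length + 1) ×ˢ Finset.range (W.length + 1)).filter
      (fun p : ℕ × ℕ => p.1 < p.2)).card := by
    apply Finset.card_le_card
    apply Finset.monotone_filter_right
    intro p _ hp
    exact hp.1
  rw [tri_card] at h1
  exact_mod_cast h1

lemma expDensity_le_one {α : Type*} (V : List α) (σ : Type*) [Fintype σ] [Nonempty σ] (n : ℕ) :
    expDensity V σ n ≤ 1 := by
  unfold expDensity
  apply div_le_one_of_le₀ _ (by positivity)
  calc ∑ w : Fin n → σ, density V (List.ofFn w) ≤ ∑ _w : Fin n → σ, (1:ℝ) :=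
        Finset.sum_le_sum (fun w _ => density_le_one V _)
    _ = (Fintype.card σ : ℝ) ^ n := by
        simp [Finset.sum_const, Fintype.card_fun]

open Classical in
lemma part_one {α σ : Type*} [DecidableEq α] [Fintype σ] (V : List α) (a : α)
    (P S : List α) (hVps : V = P ++ a :: S) (haP : a ∉ P) (haS : a ∉ S) (z : σ)
    (hq : 2 ≤ Fintype.card σ) (n : ℕ) (hn : V.length < n) :
    ((Fintype.card σ : ℝ))⁻¹ ^ (V.length - V.toFinset.card) *
        (Nat.choose (n - V.length + 1) 2) / (Nat.choose (n + 1) 2) ≤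
      expDensity V σ n := by
  classical
  set q := Fintype.card σ with hqdef
  set L := V.length with hL
  set k := L - V.toFinset.card with hk
  have hqR : (0:ℝ) < q := by exact_mod_cast (by omega : 0 < q)
  have hC : (0:ℝ) < (Nat.choose (n+1) 2 : ℝ) := by
    exact_mod_cast Nat.choose_pos (by omega : 2 ≤ n + 1)
  have hkn : k ≤ n := by omega
  have hexp : expDensity V σ n =
      (↑(∑ w : Fin n → σ, ((Finset.range (n+1) ×ˢ Finset.range (n+1)).filter
        (fun p => p.1 < p.2 ∧ IsInstance V (subword (List.ofFn w) p.1 p.2))).card) : ℝ) /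
      ↑(Nat.choose (n+1) 2) / (q:ℝ)^n := by
    unfold expDensity density
    simp only [List.length_ofFn]
    rw [← Finset.sum_div]
    push_cast
    ring
  rw [hexp, div_div, div_le_div_iff₀ hC (by positivity)]
  have hpowsplit : (q:ℝ)^n = (q:ℝ)^(n-k) * (q:ℝ)^k := by
    rw [← pow_add]; congr 1; omega
  have hpow : (q:ℝ)⁻¹^k * (q:ℝ)^n = (q:ℝ)^(n-k) := by
    rw [hpowsplit, inv_pow]
    have hqk : (q:ℝ)^k ≠ 0 := by positivity
    field_simp
  calc ((q:ℝ))⁻¹^k * ↑(Nat.choose (n - L + 1) 2) * (↑(Nat.choose (n+1) 2) * (q:ℝ)^n)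
      = (↑(Nat.choose (n - L + 1) 2) * (q:ℝ)^(n-k)) * ↑(Nat.choose (n+1) 2) := by
        rw [← hpow]; ring
    _ ≤ _ := by
        apply mul_le_mul_of_nonneg_right _ hC.le
        exact_mod_cast key_count V a P S hVps haP haS z n hn

lemma part_two {α σ : Type*} [DecidableEq α] [Fintype σ] (V : List α) (a : α)
    (P S : List α) (hVps : V = P ++ a :: S) (haP : a ∉ P) (haS : a ∉ S) (z : σ)
    (hq : 2 ≤ Fintype.card σ) :
    ((Fintype.card σ : ℝ))⁻¹ ^ (V.length - V.toFinset.card) ≤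
      Filter.liminf (fun n => expDensity V σ n) Filter.atTop := by
  classical
  have hne : Nonempty σ := ⟨z⟩
  set q := Fintype.card σ with hqdef
  set L := V.length with hL
  set k := L - V.toFinset.card with hk
  set c := ((q:ℝ))⁻¹ ^ k with hc
  set b : ℕ → ℝ := fun n => c * ↑(Nat.choose (n - L + 1) 2) / ↑(Nat.choose (n+1) 2) with hb
  have t1 : Filter.Tendsto (fun n : ℕ => (L:ℝ)/(↑n+1)) Filter.atTop (nhds 0) := by
    have h := (Filter.tendsto_add_atTop_iff_nat 1).mpr
      (tendsto_const_div_atTop_nhds_zero_nat (L:ℝ))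
    apply h.congr
    intro n; push_cast; ring
  have t2 := tendsto_const_div_atTop_nhds_zero_nat (L:ℝ)
  have tg : Filter.Tendsto (fun n : ℕ => c * ((1 - (L:ℝ)/(↑n+1)) * (1 - (L:ℝ)/↑n)))
      Filter.atTop (nhds c) := by
    have h := (tendsto_const_nhds (x := c) (f := Filter.atTop (α := ℕ))).mul
      (((tendsto_const_nhds (x := (1:ℝ)) (f := Filter.atTop (α := ℕ))).sub t1).mul
       ((tendsto_const_nhds (x := (1:ℝ)) (f := Filter.atTop (α := ℕ))).sub t2))
    simpa using h
  have heq : ∀ᶠ n in Filter.atTop,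
      c * ((1 - (L:ℝ)/(↑n+1)) * (1 - (L:ℝ)/↑n)) = b n := by
    filter_upwards [Filter.eventually_ge_atTop (L+1)] with n hn
    have hLn : L ≤ n := by omega
    have hn0 : (n:ℝ) ≠ 0 := by
      have : 0 < n := by omega
      positivity
    have hn1 : (n:ℝ) + 1 ≠ 0 := by positivity
    rw [hb]
    simp only
    rw [Nat.cast_choose_two, Nat.cast_choose_two]
    have hcast : ((n - L + 1 : ℕ) : ℝ) = (n:ℝ) - L + 1 := by
      push_cast [hLn]; ring
    rw [hcast]
    push_cast
    have hn1' : (1:ℝ) ≤ (n:ℝ) := by exact_mod_cast (by omega : 1 ≤ n)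
    have e1 : 1 - (L:ℝ)/(↑n+1) = ((n:ℝ) - L + 1)/(↑n+1) := by field_simp; ring
    have e2 : 1 - (L:ℝ)/↑n = ((n:ℝ) - L)/↑n := by field_simp
    have hA : ((n:ℝ)+1) * (n:ℝ) ≠ 0 := by positivity
    have hB : ((n:ℝ)+1) * ((n:ℝ)+1-1) / 2 ≠ 0 := by
      have : (0:ℝ) < ((n:ℝ)+1) * ((n:ℝ)+1-1) / 2 := by nlinarith
      exact this.ne'
    have e3 : (((n:ℝ)-L+1)/((n:ℝ)+1)) * (((n:ℝ)-L)/(n:ℝ))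
        = (((n:ℝ)-L+1) * ((n:ℝ)-(L:ℝ)+1-1) / 2) / (((n:ℝ)+1) * ((n:ℝ)+1-1) / 2) := by
      rw [div_mul_div_comm, div_eq_div_iff hA hB]
      ring
    rw [e1, e2, mul_div_assoc, e3]
  have tb : Filter.Tendsto b Filter.atTop (nhds c) := tg.congr' heq
  have hev : ∀ᶠ n in Filter.atTop, b n ≤ expDensity V σ n := by
    filter_upwards [Filter.eventually_gt_atTop L] with n hn
    exact part_one V a P S hVps haP haS z hq n hn
  calc c = Filter.liminf b Filter.atTop := tb.liminf_eq.symm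
    _ ≤ Filter.liminf (fun n => expDensity V σ n) Filter.atTop := by
        exact Filter.liminf_le_liminf hev tb.isBoundedUnder_ge
          (Filter.isCoboundedUnder_ge_of_le Filter.atTop
            (fun n => expDensity_le_one V σ n))


/-- For nondoubled `V` (some letter occurs exactly once) and `q ≥ 2`:
for all `n > |V|`, `E(δ(V,W_n)) ≥ q^{-‖V‖} C(n-|V|+1, 2)/C(n+1, 2)`, where
`‖V‖ = |V| - #distinct letters`; in particular
`liminf E(δ(V,W_n)) ≥ q^{-‖V‖} > 0`. -/
theorem stmt2 {α σ : Type*} [DecidableEq α] [Fintype σ] (V : List α)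
    (hV : ∃ a ∈ V, V.count a = 1) (hq : 2 ≤ Fintype.card σ) :
    (∀ n : ℕ, V.length < n →
      ((Fintype.card σ : ℝ))⁻¹ ^ (V.length - V.toFinset.card) *
          (Nat.choose (n - V.length + 1) 2) / (Nat.choose (n + 1) 2) ≤
        expDensity V σ n) ∧
    ((Fintype.card σ : ℝ))⁻¹ ^ (V.length - V.toFinset.card) ≤
      liminf (fun n => expDensity V σ n) atTop ∧
    0 < ((Fintype.card σ : ℝ))⁻¹ ^ (V.length - V.toFinset.card) := by
  
  classical
  obtain ⟨a, haV, hcount⟩ := hV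
  obtain ⟨P, S, hVps⟩ := List.mem_iff_append.mp haV
  rw [hVps, List.count_append, List.count_cons_self] at hcount
  have haP : a ∉ P := List.count_eq_zero.mp (by omega)
  have haS : a ∉ S := List.count_eq_zero.mp (by omega)
  have hne : Nonempty σ := Fintype.card_pos_iff.mp (by omega)
  obtain ⟨z⟩ := hne
  have hpos : 0 < ((Fintype.card σ : ℝ))⁻¹ ^ (V.length - V.toFinset.card) := by
    have h0 : (0:ℝ) < ((Fintype.card σ : ℝ))⁻¹ := by
      rw [inv_pos]
      exact_mod_cast (by omega : 0 < Fintype.card σ)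
    positivity
  exact ⟨fun n hn => part_one V a P S hVps haP haS z hq n hn,
    part_two V a P S hVps haP haS z hq, hpos⟩
end

section
/- Let V be a word, let V' be an anagram of V (a rearrangement of the letters of V, so V' has the same letters with the same multiplicities), let Σ be a finite alphabet, and let W_n ∈ Σ^n be chosen uniformly at random. Then E(hom(V,W_n)) = E(hom(V',W_n)). -/
open Filter Asymptotics

section StmtFourAux

variable {α σ : Type*} [Fintype σ]

private lemma natCardSigma {ι : Type*} [Fintype ι] (f : ι → Type*) [∀ i, Finite (f i)] :
    Nat.card (Σ i, f i) = ∑ i, Nat.card (f i) := by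
  haveI : ∀ i, Fintype (f i) := fun i => Fintype.ofFinite _
  simp [Nat.card_eq_fintype_card, Fintype.card_sigma]

/-- The defining condition of `homCount`, with `W = List.ofFn w`. -/
private def Cond (n : ℕ) (A : List α) (w : Fin n → σ)
    (t : ℕ × ℕ × ({a : α // a ∈ A} → List σ)) : Prop :=
  t.1 < t.2.1 ∧ t.2.1 ≤ n ∧ (∀ a, t.2.2 a ≠ []) ∧
    subword (List.ofFn w) t.1 t.2.1 = (A.attach.map t.2.2).flatten

private lemma subword_length {β : Type*} (W : List β) (a b : ℕ) (hab : a ≤ b)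
    (hb : b ≤ W.length) : (subword W a b).length = b - a := by
  simp only [subword, List.length_take, List.length_drop]
  omega

private lemma subword_getElem {β : Type*} (W : List β) (a b i : ℕ)
    (h : i < (subword W a b).length) :
    (subword W a b)[i] =
      W[a + i]'(by simp only [subword, List.length_take, List.length_drop] at h; omega) := by
  simp [subword, List.getElem_take, List.getElem_drop]

private lemma flatten_len_eq {A B : List α} (hAB : A.Perm B)
    (φ : {a : α // a ∈ A} → List σ) :
    ((B.attach.map (fun y : {a : α // a ∈ B} => φ ⟨y.1, hAB.mem_iff.mpr y.2⟩)).flatten).length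
      = ((A.attach.map φ).flatten).length := by
  classical
  set g : α → ℕ := fun a => if ha : a ∈ A then (φ ⟨a, ha⟩).length else 0 with hg
  have key : ∀ (C : List α) (ψ : {a : α // a ∈ C} → List σ),
      (∀ y : {a : α // a ∈ C}, (ψ y).length = g y.1) →
      ((C.attach.map ψ).flatten).length = (C.map g).sum := by
    intro C ψ hψ
    rw [List.length_flatten, List.map_map]
    have h1 : C.attach.map (List.length ∘ ψ) = C.attach.map (fun x => g x.1) :=
      List.map_congr_left fun x _ => hψ x
    rw [h1]
    conv_rhs => rw [← List.attach_map_subtype_val C]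
    rw [List.map_map]
    rfl
  have hA : ((A.attach.map φ).flatten).length = (A.map g).sum := by
    refine key A φ fun y => ?_
    rw [hg]
    simp only [y.2, dif_pos]
  have hB := key B (fun y : {a : α // a ∈ B} => φ ⟨y.1, hAB.mem_iff.mpr y.2⟩)
    (fun y => by rw [hg]; simp only [hAB.mem_iff.mpr y.2, dif_pos])
  rw [hA, hB]
  exact ((hAB.map g).sum_eq).symm

/-- Transport a candidate encounter of `A` to a candidate encounter of `B`,
rewriting the relevant window of the random word. -/
private def mapFun {A B : List α} (hAB : A.Perm B) (n : ℕ)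
    (x : (Fin n → σ) × ℕ × ℕ × ({a : α // a ∈ A} → List σ)) :
    (Fin n → σ) × ℕ × ℕ × ({a : α // a ∈ B} → List σ) :=
  (fun j => if x.2.1 ≤ j.1 ∧ j.1 < x.2.2.1 then
      ((B.attach.map (fun y : {a : α // a ∈ B} =>
          x.2.2.2 ⟨y.1, hAB.mem_iff.mpr y.2⟩)).flatten).getD (j.1 - x.2.1) (x.1 j)
    else x.1 j,
   x.2.1, x.2.2.1, fun y : {a : α // a ∈ B} => x.2.2.2 ⟨y.1, hAB.mem_iff.mpr y.2⟩)

private lemma mapFun_cond {A B : List α} (hAB : A.Perm B) {n : ℕ}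
    {x : (Fin n → σ) × ℕ × ℕ × ({a : α // a ∈ A} → List σ)}
    (hx : Cond n A x.1 x.2) :
    Cond n B (mapFun hAB n x).1 (mapFun hAB n x).2 := by
  obtain ⟨w, a, b, φ⟩ := x
  obtain ⟨h1, h2, h3, h4⟩ := hx
  set ψ : {a : α // a ∈ B} → List σ := fun y => φ ⟨y.1, hAB.mem_iff.mpr y.2⟩ with hψ
  set L : List σ := (B.attach.map ψ).flatten with hL
  have hwlen : (List.ofFn w).length = n := List.length_ofFn
  have hLA : ((A.attach.map φ).flatten).length = b - a := by
    rw [← h4, subword_length _ _ _ h1.le (by rw [hwlen]; exact h2)]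
  have hLlen : L.length = b - a := by
    rw [hL, hψ, flatten_len_eq hAB φ, hLA]
  refine ⟨h1, h2, fun y => h3 _, ?_⟩
  set w' : Fin n → σ := fun j => if a ≤ j.1 ∧ j.1 < b then L.getD (j.1 - a) (w j) else w j
    with hw'
  show subword (List.ofFn w') a b = L
  have hw'len : (List.ofFn w').length = n := List.length_ofFn
  apply List.ext_getElem
  · rw [subword_length _ _ _ h1.le (by rw [hw'len]; exact h2), hLlen]
  · intro i hi1 hi2
    have hib : i < b - a := by
      rwa [subword_length _ _ _ h1.le (by rw [hw'len]; exact h2)] at hi1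
    rw [subword_getElem, List.getElem_ofFn]
    show (if a ≤ a + i ∧ a + i < b then L.getD (a + i - a) (w _) else w _) = L[i]
    rw [if_pos ⟨Nat.le_add_right _ _, by omega⟩]
    have hai : a + i - a = i := by omega
    rw [hai, List.getD_eq_getElem _ _ (by omega : i < L.length)]

private lemma mapFun_invol {A B : List α} (hAB : A.Perm B) (hBA : B.Perm A) {n : ℕ}
    {x : (Fin n → σ) × ℕ × ℕ × ({a : α // a ∈ A} → List σ)}
    (hx : Cond n A x.1 x.2) :
    mapFun hBA n (mapFun hAB n x) = x := by
  obtain ⟨w, a, b, φ⟩ := x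
  obtain ⟨h1, h2, h3, h4⟩ := hx
  have hwlen : (List.ofFn w).length = n := List.length_ofFn
  have hLA : ((A.attach.map φ).flatten).length = b - a := by
    rw [← h4, subword_length _ _ _ h1.le (by rw [hwlen]; exact h2)]
  have hφ : (fun z : {a : α // a ∈ A} =>
      (fun y : {a : α // a ∈ B} => φ ⟨y.1, hAB.mem_iff.mpr y.2⟩)
        ⟨z.1, hBA.mem_iff.mpr z.2⟩) = φ := by
    funext z
    exact congrArg φ (Subtype.ext rfl)
  set ψ : {a : α // a ∈ B} → List σ := fun y => φ ⟨y.1, hAB.mem_iff.mpr y.2⟩ with hψ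
  set L : List σ := (B.attach.map ψ).flatten with hL
  have hLlen : L.length = b - a := by
    rw [hL, hψ, flatten_len_eq hAB φ, hLA]
  set w' : Fin n → σ := fun j => if a ≤ j.1 ∧ j.1 < b then L.getD (j.1 - a) (w j) else w j
    with hw'
  show (fun j => if a ≤ j.1 ∧ j.1 < b then
      ((A.attach.map (fun z : {a : α // a ∈ A} =>
        ψ ⟨z.1, hBA.mem_iff.mpr z.2⟩)).flatten).getD (j.1 - a) (w' j)
    else w' j, a, b, fun z : {a : α // a ∈ A} => ψ ⟨z.1, hBA.mem_iff.mpr z.2⟩)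
      = (w, a, b, φ)
  have hψφ : (fun z : {a : α // a ∈ A} => ψ ⟨z.1, hBA.mem_iff.mpr z.2⟩) = φ := hφ
  rw [hψφ]
  refine Prod.ext ?_ rfl
  funext j
  show (if a ≤ j.1 ∧ j.1 < b then
      ((A.attach.map φ).flatten).getD (j.1 - a) (w' j) else w' j) = w j
  by_cases hj : a ≤ j.1 ∧ j.1 < b
  · rw [if_pos hj]
    have hja : j.1 - a < b - a := by omega
    rw [List.getD_eq_getElem _ _ (by omega : j.1 - a < ((A.attach.map φ).flatten).length)]
    have h4' : ∀ (k : ℕ) (hk1 : k < (subword (List.ofFn w) a b).length)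
        (hk2 : k < ((A.attach.map φ).flatten).length),
        ((A.attach.map φ).flatten)[k] = (subword (List.ofFn w) a b)[k] := by
      intro k hk1 hk2
      simp only [h4]
    have hsublen : (subword (List.ofFn w) a b).length = b - a :=
      subword_length _ _ _ h1.le (by rw [hwlen]; exact h2)
    rw [h4' (j.1 - a) (by omega) (by omega)]
    rw [subword_getElem, List.getElem_ofFn]
    congr 1
    exact Fin.ext (by simp; omega)
  · rw [if_neg hj]
    show (if a ≤ j.1 ∧ j.1 < b then L.getD (j.1 - a) (w j) else w j) = w j
    rw [if_neg hj]

private lemma cond_finite {n : ℕ} (A : List α) (w : Fin n → σ) :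
    {t : ℕ × ℕ × ({a : α // a ∈ A} → List σ) | Cond n A w t}.Finite := by
  classical
  haveI : Finite {a : α // a ∈ A} := (A.finite_toSet).to_subtype
  refine Set.Finite.subset
    ((Set.finite_Iic n).prod ((Set.finite_Iic n).prod
      (Set.Finite.pi' (fun _ => List.finite_length_le σ n)))) ?_
  rintro ⟨a, b, φ⟩ ⟨h1, h2, h3, h4⟩
  have h1' : a < b := h1
  have h2' : b ≤ n := h2
  have hwlen : (List.ofFn w).length = n := List.length_ofFn
  have hsublen : (subword (List.ofFn w) a b).length = b - a :=
    subword_length _ _ _ h1'.le (by rw [hwlen]; exact h2')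
  refine ⟨Set.mem_Iic.mpr (by omega), Set.mem_Iic.mpr h2', fun y => ?_⟩
  have hmem : φ y ∈ A.attach.map φ := List.mem_map_of_mem (List.mem_attach _ _)
  have hle : (φ y).length ≤ ((A.attach.map φ).flatten).length :=
    (List.sublist_flatten_of_mem hmem).length_le
  rw [← h4, hsublen] at hle
  exact Set.mem_setOf_eq ▸ (by omega : (φ y).length ≤ n)

private lemma sum_homCount_perm {A B : List α} (hAB : A.Perm B) (n : ℕ) :
    ∑ w : Fin n → σ, homCount A (List.ofFn w) = ∑ w : Fin n → σ, homCount B (List.ofFn w) := by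
  classical
  have key : ∀ (C : List α), ∑ w : Fin n → σ, homCount C (List.ofFn w)
      = Nat.card {x : (Fin n → σ) × (ℕ × ℕ × ({a : α // a ∈ C} → List σ)) //
          Cond n C x.1 x.2} := by
    intro C
    haveI : ∀ w : Fin n → σ, Finite {t // Cond n C w t} :=
      fun w => (cond_finite C w).to_subtype
    rw [Nat.card_congr (Equiv.subtypeProdEquivSigmaSubtype (fun w t => Cond n C w t)),
      natCardSigma]
    refine Finset.sum_congr rfl fun w _ => ?_
    have hset : {t : ℕ × ℕ × ({a : α // a ∈ C} → List σ) |
        t.1 < t.2.1 ∧ t.2.1 ≤ (List.ofFn w).length ∧ (∀ a, t.2.2 a ≠ []) ∧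
        subword (List.ofFn w) t.1 t.2.1 = (C.attach.map t.2.2).flatten}
        = {t | Cond n C w t} := by
      ext t
      simp [Cond, List.length_ofFn]
    rw [homCount, hset, ← Nat.card_coe_set_eq]
    rfl
  rw [key A, key B]
  exact Nat.card_congr
    ⟨fun x => ⟨mapFun hAB n x.1, mapFun_cond hAB x.2⟩,
     fun x => ⟨mapFun hAB.symm n x.1, mapFun_cond hAB.symm x.2⟩,
     fun x => Subtype.ext (mapFun_invol hAB hAB.symm x.2),
     fun x => Subtype.ext (mapFun_invol hAB.symm hAB x.2)⟩

end StmtFourAux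

/-- If `V'` is an anagram of `V`, then `E(hom(V, W_n)) = E(hom(V', W_n))`. -/
theorem stmt4 {α σ : Type*} [Fintype σ] (V V' : List α) (h : V.Perm V') (n : ℕ) :
    expHom V σ n = expHom V' σ n := by
  unfold expHom
  congr 1
  rw [← Nat.cast_sum, ← Nat.cast_sum, sum_homCount_perm h n]
end

section
/- Let V be a word with distinct letters x_1, …, x_k, where x_i has multiplicity r_i in V; let r = min_i r_i, d = gcd(r_1, …, r_k), and let U be the word obtained from V by deleting every occurrence of each letter of multiplicity r. Let Σ be a finite alphabet with q ≥ 2 letters. Then, as n → ∞, the proportion of V-instances W ∈ Σ^{dn} for which there exists a nonerasing homomorphism φ with φ(V) = W and |φ(U)| < √(dn) tends to 1. -/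
open Filter Asymptotics

/-! ### Auxiliary lemmas -/

lemma flatten_length_eq {α β : Type*} [DecidableEq α] (L : List α) (f : α → List β) :
    ((L.map f).flatten).length = ∑ a ∈ L.toFinset, L.count a * (f a).length := by
  rw [List.length_flatten, List.map_map, Finset.sum_list_map_count]
  simp [smul_eq_mul]

lemma ofFn_getD {β : Type*} (l : List β) (n : ℕ) (hl : l.length = n) (d : β) :
    List.ofFn (fun i : Fin n => l.getD i d) = l := by
  apply List.ext_getElem
  · simp [hl]
  · intro i h1 h2
    simp only [List.getElem_ofFn]
    exact List.getD_eq_getElem l d h2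

lemma flatten_recover {α β : Type*} (L : List α) (f g : α → List β)
    (hlen : ∀ a ∈ L, (f a).length = (g a).length)
    (h : (L.map f).flatten = (L.map g).flatten) : ∀ a ∈ L, f a = g a := by
  induction L with
  | nil => simp
  | cons hd tl ih =>
    simp only [List.map_cons, List.flatten_cons] at h
    obtain ⟨h1, h2⟩ := List.append_inj h (hlen hd (by simp))
    intro a ha
    rcases List.mem_cons.mp ha with rfl | ha
    · exact h1
    · exact ih (fun b hb => hlen b (List.mem_cons_of_mem _ hb)) h2 a ha

lemma dedup_flatten_length {α β : Type*} [DecidableEq α] (V : List α) (f : α → List β) :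
    ((V.dedup.map f).flatten).length = ∑ a ∈ V.toFinset, (f a).length := by
  rw [flatten_length_eq]
  have hTF : V.dedup.toFinset = V.toFinset := by
    ext a; simp
  rw [hTF]
  refine Finset.sum_congr rfl fun a ha => ?_
  rw [List.count_dedup, if_pos (List.mem_toFinset.mp ha), one_mul]

lemma lower_count {α σ : Type*} [DecidableEq α] [Fintype σ] (V : List α) (arb : σ)
    (m : ℕ) (ℓ : α → ℕ) (hpos : ∀ a ∈ V.toFinset, 1 ≤ ℓ a)
    (hsum : ∑ a ∈ V.toFinset, V.count a * ℓ a = m) :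
    (Fintype.card σ) ^ (∑ a ∈ V.toFinset, ℓ a) ≤
      Nat.card {w : Fin m → σ // IsInstance V (List.ofFn w)} := by
  classical
  set VT := V.toFinset with hVT
  set φf : (∀ a : VT, Fin (ℓ a.1) → σ) → α → List σ := fun ψ a =>
    if h : a ∈ VT then List.ofFn (ψ ⟨a, h⟩) else [arb] with hφf
  have hlenφ : ∀ ψ, ∀ a ∈ VT, ((φf ψ) a).length = ℓ a := by
    intro ψ a ha
    simp [hφf, ha]
  have hWlen : ∀ ψ, ((V.map (φf ψ)).flatten).length = m := by
    intro ψ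
    rw [flatten_length_eq]
    rw [← hsum]
    exact Finset.sum_congr rfl fun a ha => by rw [hlenφ ψ a ha]
  have hne : ∀ ψ, ∀ a, (φf ψ) a ≠ [] := by
    intro ψ a
    by_cases h : a ∈ VT
    · simp only [hφf, dif_pos h]
      intro hc
      have := congrArg List.length hc
      simp at this
      have := hpos a h
      omega
    · simp [hφf, dif_neg h]
  set F : (∀ a : VT, Fin (ℓ a.1) → σ) → {w : Fin m → σ // IsInstance V (List.ofFn w)} :=
    fun ψ => ⟨fun i => ((V.map (φf ψ)).flatten).getD i arb, by
      refine ⟨φf ψ, hne ψ, ?_⟩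
      rw [ofFn_getD _ _ (hWlen ψ)]⟩ with hF
  have hFinj : Function.Injective F := by
    intro ψ1 ψ2 h
    have hw : (fun i : Fin m => ((V.map (φf ψ1)).flatten).getD (↑i) arb)
        = (fun i : Fin m => ((V.map (φf ψ2)).flatten).getD (↑i) arb) := congrArg Subtype.val h
    have hW : (V.map (φf ψ1)).flatten = (V.map (φf ψ2)).flatten := by
      rw [← ofFn_getD ((V.map (φf ψ1)).flatten) m (hWlen ψ1) arb,
        ← ofFn_getD ((V.map (φf ψ2)).flatten) m (hWlen ψ2) arb]
      exact congrArg List.ofFn hw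
    have := flatten_recover V (φf ψ1) (φf ψ2)
      (fun a ha => by
        rw [hlenφ ψ1 a (List.mem_toFinset.mpr ha), hlenφ ψ2 a (List.mem_toFinset.mpr ha)])
      hW
    funext a
    have ha : (a : α) ∈ V := List.mem_toFinset.mp a.2
    have h2 := this a ha
    simp only [hφf, dif_pos a.2] at h2
    rw [List.ofFn_inj] at h2
    convert h2
  calc (Fintype.card σ) ^ (∑ a ∈ VT, ℓ a)
      = Nat.card (∀ a : VT, Fin (ℓ a.1) → σ) := by
        simp only [Nat.card_eq_fintype_card, Fintype.card_pi, Fintype.card_fun,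
          Fintype.card_fin]
        rw [← Finset.prod_pow_eq_pow_sum]
        rw [← Finset.prod_coe_sort VT]
        exact Finset.prod_congr rfl fun a _ => by simp
    _ ≤ _ := Nat.card_le_card_of_injective F hFinj

lemma upper_bad {α σ : Type*} [DecidableEq α] [Fintype σ] (V : List α) (arb : σ)
    (m E : ℕ) (P : (α → List σ) → Prop)
    (hE : ∀ φ : α → List σ, (∀ a, φ a ≠ []) → ((V.map φ).flatten).length = m → P φ →
        ∑ a ∈ V.toFinset, (φ a).length ≤ E) :
    Nat.card {w : Fin m → σ // ∃ φ : α → List σ, (∀ a, φ a ≠ []) ∧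
        List.ofFn w = (V.map φ).flatten ∧ P φ} ≤
      (m + 1) ^ V.toFinset.card * (Fintype.card σ) ^ E := by
  classical
  set VT := V.toFinset with hVT
  set T := {w : Fin m → σ // ∃ φ : α → List σ, (∀ a, φ a ≠ []) ∧
    List.ofFn w = (V.map φ).flatten ∧ P φ} with hT
  have key : ∀ (x : T), ∀ (φ : α → List σ), (∀ a, φ a ≠ []) →
      List.ofFn x.1 = (V.map φ).flatten → P φ →
      (((V.map φ).flatten).length = m ∧ (∀ a ∈ VT, (φ a).length ≤ m) ∧
        ((V.dedup.map φ).flatten).length ≤ E) := by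
    intro x φ hne hw hP
    have hlen : ((V.map φ).flatten).length = m := by
      rw [← hw]; simp
    refine ⟨hlen, ?_, ?_⟩
    · intro a ha
      have hmem : a ∈ V := List.mem_toFinset.mp ha
      have h1 : (φ a).length ≤ V.count a * (φ a).length :=
        Nat.le_mul_of_pos_left _ (List.count_pos_iff.mpr hmem)
      have h2 : V.count a * (φ a).length ≤ ∑ b ∈ VT, V.count b * (φ b).length :=
        Finset.single_le_sum (f := fun b => V.count b * (φ b).length)
          (fun b _ => Nat.zero_le _) ha
      rw [← flatten_length_eq, hlen] at h2
      omega
    · rw [dedup_flatten_length]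
      exact hE φ hne hlen hP
  set G : T → (VT → Fin (m + 1)) × (Fin E → σ) := fun x =>
    (fun a => ⟨(x.2.choose a).length, by
        have sp := x.2.choose_spec
        have := (key x _ sp.1 sp.2.1 sp.2.2).2.1 a a.2
        omega⟩,
     fun i => ((V.dedup.map x.2.choose).flatten).getD i arb) with hG
  have hGinj : Function.Injective G := by
    intro x1 x2 h
    obtain ⟨hne1, hw1, hP1⟩ := x1.2.choose_spec
    obtain ⟨hne2, hw2, hP2⟩ := x2.2.choose_spec
    set φ1 := x1.2.choose
    set φ2 := x2.2.choose
    have h1 := congrFun (congrArg Prod.fst h)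
    have h2 := congrFun (congrArg Prod.snd h)
    have hlen : ∀ a ∈ V, (φ1 a).length = (φ2 a).length := by
      intro a ha
      have := h1 ⟨a, List.mem_toFinset.mpr ha⟩
      exact congrArg Fin.val this
    have hlenD : ∀ a ∈ V.dedup, (φ1 a).length = (φ2 a).length := by
      intro a ha; exact hlen a (List.mem_dedup.mp ha)
    have hcatlen : ((V.dedup.map φ1).flatten).length = ((V.dedup.map φ2).flatten).length := by
      rw [dedup_flatten_length, dedup_flatten_length]
      exact Finset.sum_congr rfl fun a ha => hlen a (List.mem_toFinset.mp ha)
    have hcatE : ((V.dedup.map φ1).flatten).length ≤ E :=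
      (key x1 _ hne1 hw1 hP1).2.2
    have hcat : (V.dedup.map φ1).flatten = (V.dedup.map φ2).flatten := by
      apply List.ext_getElem hcatlen
      intro i hi1 hi2
      have hiE : i < E := lt_of_lt_of_le hi1 hcatE
      have hi : ((V.dedup.map φ1).flatten).getD i arb
          = ((V.dedup.map φ2).flatten).getD i arb := h2 ⟨i, hiE⟩
      rwa [List.getD_eq_getElem _ _ hi1, List.getD_eq_getElem _ _ hi2] at hi
    have hagree := flatten_recover V.dedup φ1 φ2 hlenD hcat
    have hagreeV : ∀ a ∈ V, φ1 a = φ2 a := fun a ha => hagree a (List.mem_dedup.mpr ha)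
    have hWeq : List.ofFn x1.1 = List.ofFn x2.1 := by
      rw [hw1, hw2]
      congr 1
      exact List.map_congr_left hagreeV
    exact Subtype.ext (List.ofFn_inj.mp hWeq)
  have hcard := Nat.card_le_card_of_injective G hGinj
  calc Nat.card T ≤ Nat.card ((VT → Fin (m + 1)) × (Fin E → σ)) := hcard
    _ = (m + 1) ^ VT.card * (Fintype.card σ) ^ E := by
        rw [Nat.card_prod, Nat.card_fun, Nat.card_fun]
        simp [Nat.card_eq_fintype_card]

lemma finset_gcd_bezout {α : Type*} [DecidableEq α] (s : Finset α) (f : α → ℕ) :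
    ∃ y : α → ℤ, ∑ a ∈ s, (f a : ℤ) * y a = ((s.gcd f : ℕ) : ℤ) := by
  classical
  induction s using Finset.induction_on with
  | empty => exact ⟨fun _ => 0, by simp⟩
  | insert a s ha ih =>
    obtain ⟨y, hy⟩ := ih
    refine ⟨fun b => if b = a then Nat.gcdA (f a) (s.gcd f)
      else Nat.gcdB (f a) (s.gcd f) * y b, ?_⟩
    rw [Finset.sum_insert ha, Finset.gcd_insert]
    have hgcd : (((GCDMonoid.gcd (f a) (s.gcd f) : ℕ)) : ℤ) = ((Nat.gcd (f a) (s.gcd f) : ℕ) : ℤ) := by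
      norm_cast
    rw [hgcd, Nat.gcd_eq_gcd_ab]
    have : ∀ b ∈ s, (f b : ℤ) * (if b = a then Nat.gcdA (f a) (s.gcd f)
        else Nat.gcdB (f a) (s.gcd f) * y b) =
        Nat.gcdB (f a) (s.gcd f) * ((f b : ℤ) * y b) := by
      intro b hb
      rw [if_neg (by rintro rfl; exact ha hb)]
      ring
    rw [Finset.sum_congr rfl this]
    beta_reduce
    rw [if_pos rfl, ← Finset.mul_sum, hy]
    ring

lemma exists_good_vec {α : Type*} [DecidableEq α] (V : List α) (hV : V ≠ []) (r d : ℕ)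
    (hrmin : ∀ a ∈ V, r ≤ V.count a) (a0 : α) (ha0V : a0 ∈ V) (ha0 : V.count a0 = r)
    (hd : d = V.toFinset.gcd fun a => V.count a) :
    ∃ C0 N : ℕ, 1 ≤ N ∧ ∀ n : ℕ, N ≤ n → ∃ ℓ : α → ℕ,
      (∀ a ∈ V.toFinset, 1 ≤ ℓ a) ∧
      (∑ a ∈ V.toFinset, V.count a * ℓ a = d * n) ∧
      ((d * n : ℝ) / r - C0 ≤ (∑ a ∈ V.toFinset, ℓ a : ℝ)) := by
  classical
  have hr1 : 1 ≤ r := by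
    have := List.count_pos_iff.mpr ha0V
    omega
  have hrz : (r : ℤ) ≠ 0 := by exact_mod_cast Nat.one_le_iff_ne_zero.mp hr1
  have hrpos : (0 : ℤ) < r := by exact_mod_cast hr1
  have hd1 : 1 ≤ d := by
    have hdvd : d ∣ V.count a0 := hd ▸ Finset.gcd_dvd (List.mem_toFinset.mpr ha0V)
    rcases Nat.eq_zero_or_pos d with h | h
    · rw [h] at hdvd; simp at hdvd; omega
    · exact h
  obtain ⟨y, hy⟩ := finset_gcd_bezout V.toFinset (fun a => V.count a)
  rw [← hd] at hy
  set VT := V.toFinset with hVT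
  have ha0T : a0 ∈ VT := List.mem_toFinset.mpr ha0V
  set C1 : ℕ := 2 * r * V.length with hC1
  refine ⟨C1, C1 + r, by omega, ?_⟩
  intro n hn
  set g : α → ℤ := fun a => (n : ℤ) * y a % r + r with hg
  have hgpos : ∀ a, 0 < g a := fun a =>
    add_pos_of_nonneg_of_pos (Int.emod_nonneg _ hrz) hrpos
  have hgle : ∀ a, g a ≤ 2 * r := fun a => by
    have := Int.emod_lt_of_pos ((n : ℤ) * y a) hrpos
    simp only [hg]; omega
  set S : ℤ := ∑ a ∈ VT.erase a0, (V.count a : ℤ) * g a with hS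
  have hSnonneg : 0 ≤ S :=
    Finset.sum_nonneg fun a _ => mul_nonneg (by positivity) (hgpos a).le
  have hSle : S ≤ C1 := by
    have h1 : S ≤ ∑ a ∈ VT.erase a0, (V.count a : ℤ) * (2 * r) :=
      Finset.sum_le_sum fun a _ => mul_le_mul_of_nonneg_left (hgle a) (by positivity)
    have h2 : ∑ a ∈ VT.erase a0, (V.count a : ℤ) * (2 * r)
        ≤ ∑ a ∈ VT, (V.count a : ℤ) * (2 * r) := by
      apply Finset.sum_le_sum_of_subset_of_nonneg (Finset.erase_subset _ _)
      intro a _ _; positivity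
    have h3 : ∑ a ∈ VT, (V.count a : ℤ) * (2 * r) = (V.length : ℤ) * (2 * r) := by
      rw [← Finset.sum_mul]
      congr 1
      have : ∑ a ∈ VT, V.count a = V.length := by
        have h4 := Finset.sum_list_map_count V (fun _ => (1 : ℕ))
        simp only [smul_eq_mul, mul_one] at h4
        rw [hVT, ← h4]
        simp [List.map_const]
      exact_mod_cast this
    simp only [hC1]
    push_cast
    linarith
  set Q : ℤ := (n : ℤ) * y a0 + ∑ a ∈ VT.erase a0, (V.count a : ℤ) * ((n : ℤ) * y a / r - 1)
    with hQ
  have key : ∀ a : α, g a = (n : ℤ) * y a - r * ((n : ℤ) * y a / r - 1) := by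
    intro a
    have := Int.emod_def ((n : ℤ) * y a) r
    simp only [hg]
    linarith
  have hdn : (d : ℤ) * n = (r : ℤ) * ((n : ℤ) * y a0) + ∑ a ∈ VT.erase a0,
      (V.count a : ℤ) * ((n : ℤ) * y a) := by
    have := Finset.add_sum_erase VT (fun a => (V.count a : ℤ) * y a * n) ha0T
    calc (d : ℤ) * n = (∑ a ∈ VT, (V.count a : ℤ) * y a) * n := by rw [hy]
      _ = ∑ a ∈ VT, (V.count a : ℤ) * y a * n := by rw [Finset.sum_mul]
      _ = (V.count a0 : ℤ) * y a0 * n + ∑ a ∈ VT.erase a0, (V.count a : ℤ) * y a * n :=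
          this.symm
      _ = _ := by
          rw [ha0]
          rw [Finset.sum_congr rfl (fun a _ => by ring :
            ∀ a ∈ VT.erase a0, (V.count a : ℤ) * y a * n = (V.count a : ℤ) * ((n:ℤ) * y a))]
          ring
  have hQid : (d : ℤ) * n - S = r * Q := by
    have hterm : ∀ a ∈ VT.erase a0, (V.count a : ℤ) * ((n : ℤ) * y a) - (V.count a : ℤ) * g a
        = (V.count a : ℤ) * ((n : ℤ) * y a / r - 1) * r := by
      intro a _
      rw [key a]
      ring
    calc (d : ℤ) * n - S
        = ((r : ℤ) * ((n : ℤ) * y a0) + ∑ a ∈ VT.erase a0, (V.count a : ℤ) * ((n : ℤ) * y a))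
          - ∑ a ∈ VT.erase a0, (V.count a : ℤ) * g a := by rw [hdn, hS]
      _ = (r : ℤ) * ((n : ℤ) * y a0) + ∑ a ∈ VT.erase a0,
            ((V.count a : ℤ) * ((n : ℤ) * y a) - (V.count a : ℤ) * g a) := by
          rw [Finset.sum_sub_distrib]
          ring
      _ = (r : ℤ) * ((n : ℤ) * y a0) + ∑ a ∈ VT.erase a0,
            (V.count a : ℤ) * ((n : ℤ) * y a / r - 1) * r := by
          rw [Finset.sum_congr rfl hterm]
      _ = r * Q := by
          rw [hQ, ← Finset.sum_mul]
          ring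
  have hdnS : (C1 : ℤ) + r ≤ (d : ℤ) * n := by
    have : (n : ℤ) ≤ (d : ℤ) * n := by
      nlinarith [Int.ofNat_nonneg n, (by exact_mod_cast hd1 : (1:ℤ) ≤ d)]
    have hn' : (C1 : ℤ) + r ≤ n := by exact_mod_cast hn
    linarith
  have hQpos : 1 ≤ Q := by
    nlinarith [hQid, hSle, hdnS, hrpos]
  set ℓ : α → ℕ := fun a => if a = a0 then Q.toNat else (g a).toNat with hℓ
  have hℓcast : ∀ a, ((ℓ a : ℤ)) = if a = a0 then Q else g a := by
    intro a
    simp only [hℓ]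
    split
    · rw [Int.toNat_of_nonneg (by omega)]
    · rw [Int.toNat_of_nonneg (hgpos a).le]
  refine ⟨ℓ, ?_, ?_, ?_⟩
  · intro a _
    simp only [hℓ]
    split
    · omega
    · have := hgpos a; omega
  · have : (↑(∑ a ∈ VT, V.count a * ℓ a) : ℤ) = (↑(d * n) : ℤ) := by
      push_cast
      rw [Finset.sum_congr rfl (fun a _ => by rw [hℓcast a])]
      rw [← Finset.add_sum_erase VT _ ha0T, if_pos rfl]
      rw [Finset.sum_congr rfl (fun a ha => by
        rw [if_neg (Finset.ne_of_mem_erase ha)])]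
      rw [ha0]
      linarith [hQid]
    exact_mod_cast this
  · have h1 : (Q.toNat : ℝ) ≤ (∑ a ∈ VT, ℓ a : ℝ) := by
      have : ℓ a0 ≤ ∑ a ∈ VT, ℓ a :=
        Finset.single_le_sum (f := fun a => ℓ a) (fun _ _ => Nat.zero_le _) ha0T
      have hla0 : ℓ a0 = Q.toNat := by simp [hℓ]
      rw [← hla0]
      exact_mod_cast this
    have h2 : (d * n : ℝ) - C1 ≤ r * (Q.toNat : ℝ) := by
      have : (d : ℤ) * n - C1 ≤ r * Q := by linarith [hQid, hSnonneg]
      have h3 : ((d : ℤ) * n - C1 : ℤ) ≤ (r : ℤ) * Q.toNat := by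
        rw [Int.toNat_of_nonneg (by omega)]; exact this
      exact_mod_cast h3
    have hrR : (1 : ℝ) ≤ r := by exact_mod_cast hr1
    rw [div_sub' (by positivity), div_le_iff₀ (by positivity)]
    calc (d * n : ℝ) - (r : ℝ) * C1 ≤ (d * n : ℝ) - C1 := by
          nlinarith [(by positivity : (0:ℝ) ≤ (C1:ℝ))]
      _ ≤ r * (Q.toNat : ℝ) := h2
      _ ≤ (∑ a ∈ VT, ℓ a : ℝ) * r := by
          rw [mul_comm]
          exact mul_le_mul_of_nonneg_right h1 (by positivity)

lemma exponent_bound {α σ : Type*} [DecidableEq α] (V : List α) (r m : ℕ)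
    (hr1 : 1 ≤ r) (hrmin : ∀ a ∈ V, r ≤ V.count a)
    (φ : α → List σ) (hlen : ((V.map φ).flatten).length = m)
    (ht : Real.sqrt m ≤ ((((V.filter fun a => V.count a ≠ r).map φ).flatten).length : ℝ)) :
    ((∑ a ∈ V.toFinset, (φ a).length : ℕ) : ℝ) ≤
      (m : ℝ) / r - Real.sqrt m / (r * (r + 1)) := by
  classical
  set VT := V.toFinset with hVT
  set lf : α → ℕ := fun a => (φ a).length with hlf
  set U : List α := V.filter fun a => V.count a ≠ r with hU
  set A : Finset α := VT.filter (fun a => V.count a = r) with hA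
  set B : Finset α := VT.filter (fun a => ¬ (V.count a = r)) with hB
  set tN : ℕ := ∑ a ∈ B, V.count a * lf a with htN
  have hUlen : (((U.map φ).flatten).length) = tN := by
    rw [flatten_length_eq]
    have hUT : U.toFinset = B := by
      simp only [hU, hB, hA, hVT]
      ext a
      simp [List.mem_filter, and_comm]
    rw [hUT]
    refine Finset.sum_congr rfl fun a ha => ?_
    have hane : V.count a ≠ r := by
      simp only [hB, Finset.mem_filter] at ha
      exact ha.2
    congr 1
    simp only [hU]
    rw [List.count_filter (by simpa using hane)]
  have hm : ∑ a ∈ A, V.count a * lf a + tN = m := by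
    rw [htN, hA, hB, Finset.sum_filter_add_sum_filter_not]
    rw [← hlen, flatten_length_eq]
  have hAsum : ∑ a ∈ A, V.count a * lf a = r * ∑ a ∈ A, lf a := by
    rw [Finset.mul_sum]
    refine Finset.sum_congr rfl fun a ha => ?_
    have : V.count a = r := (Finset.mem_filter.mp ha).2
    rw [this]
  have hBsum : (r + 1) * ∑ a ∈ B, lf a ≤ tN := by
    rw [Finset.mul_sum, htN]
    refine Finset.sum_le_sum fun a ha => ?_
    obtain ⟨haT, hane⟩ := Finset.mem_filter.mp ha
    have haV : a ∈ V := List.mem_toFinset.mp haT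
    have := hrmin a haV
    exact Nat.mul_le_mul_right _ (by omega)
  have hsplit : ∑ a ∈ VT, lf a = ∑ a ∈ A, lf a + ∑ a ∈ B, lf a :=
    (Finset.sum_filter_add_sum_filter_not VT _ lf).symm
  set x : ℝ := ((∑ a ∈ A, lf a : ℕ) : ℝ) with hx
  set b : ℝ := ((∑ a ∈ B, lf a : ℕ) : ℝ) with hb
  set t : ℝ := (tN : ℝ) with htR
  have hR1 : (1 : ℝ) ≤ r := by exact_mod_cast hr1
  have hRpos : (0 : ℝ) < r := by linarith
  have h1 : (r : ℝ) * x + t = m := by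
    have hnat : r * (∑ a ∈ A, lf a) + tN = m := by rw [← hAsum]; exact hm
    rw [hx, htR]
    exact_mod_cast hnat
  have h2 : ((r : ℝ) + 1) * b ≤ t := by
    rw [hb, htR]; exact_mod_cast hBsum
  have h3 : Real.sqrt m ≤ t := by rw [htR, ← hUlen]; exact ht
  have hgoal : ((∑ a ∈ VT, lf a : ℕ) : ℝ) = x + b := by
    rw [hx, hb, hsplit]; push_cast; ring
  rw [hgoal]
  have hs0 : 0 ≤ Real.sqrt m := Real.sqrt_nonneg _
  have hb0 : 0 ≤ b := by rw [hb]; positivity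
  have hden : (0 : ℝ) < r * (r + 1) := by positivity
  have key : (x + b) * (r * (r + 1)) ≤ m * (r + 1) - Real.sqrt m := by
    nlinarith [mul_le_mul_of_nonneg_right h2 hRpos.le, h1, h3]
  have heq : (m : ℝ) / r - Real.sqrt m / (r * (r + 1))
      = ((m : ℝ) * (r + 1) - Real.sqrt m) / (r * (r + 1)) := by
    field_simp
  rw [heq, le_div_iff₀ hden]
  exact key

lemma tendsto_F_aux (K : ℕ) (Cq ρ : ℝ) (hρ0 : 0 < ρ) (hρ1 : ρ < 1) :
    Tendsto (fun j : ℕ => Cq * ((j : ℝ) + 1) ^ (2 * K) * ρ ^ j) atTop (nhds 0) := by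
  have h := tendsto_pow_const_mul_const_pow_of_lt_one (2 * K) hρ0.le hρ1
  have h2 : Tendsto (fun j : ℕ => ((j + 1 : ℕ) : ℝ) ^ (2 * K) * ρ ^ (j + 1)) atTop (nhds 0) :=
    h.comp (tendsto_add_atTop_nat 1)
  have h3 := h2.const_mul (Cq / ρ)
  rw [mul_zero] at h3
  refine h3.congr fun j => ?_
  push_cast
  field_simp
  ring

lemma sqrt_tendsto_atTop : Tendsto Real.sqrt atTop atTop := by
  have h := tendsto_rpow_atTop (show (0:ℝ) < 1/2 by norm_num)
  refine h.congr' ?_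
  filter_upwards [eventually_ge_atTop (0:ℝ)] with x hx
  rw [Real.sqrt_eq_rpow]

/-- Let `V` have minimal letter-multiplicity `r` and gcd of multiplicities `d`,
let `U` be `V` with all letters of multiplicity `r` removed, and let `|Σ| = q ≥ 2`.
Then, as `n → ∞`, the proportion of `V`-instances `W ∈ Σ^{dn}` admitting a
nonerasing homomorphism `φ` with `φ(V) = W` and `|φ(U)| < √(dn)` tends to 1. -/
theorem stmt6 {α σ : Type*} [DecidableEq α] [Fintype σ] (V : List α) (hV : V ≠ [])
    (hq : 2 ≤ Fintype.card σ) (r d : ℕ)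
    (hr : (∀ a ∈ V, r ≤ V.count a) ∧ ∃ a ∈ V, V.count a = r)
    (hd : d = V.toFinset.gcd fun a => V.count a) :
    Tendsto (fun n : ℕ =>
      (Nat.card {w : Fin (d * n) → σ // ∃ φ : α → List σ, (∀ a, φ a ≠ []) ∧
          List.ofFn w = (V.map φ).flatten ∧
          ((((V.filter fun a => V.count a ≠ r).map φ).flatten.length : ℝ) <
            Real.sqrt (d * n))} : ℝ) /
        (Nat.card {w : Fin (d * n) → σ // IsInstance V (List.ofFn w)} : ℝ))
      atTop (nhds 1) := by
  classical
  obtain ⟨hrmin, ⟨a0, ha0V, ha0⟩⟩ := hr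
  obtain ⟨arb⟩ : Nonempty σ := Fintype.card_pos_iff.mp (by omega)
  set q : ℕ := Fintype.card σ with hqdef
  have hq1 : (1 : ℝ) < q := by exact_mod_cast by omega
  have hq0 : (0 : ℝ) < q := by linarith
  have hr1 : 1 ≤ r := by
    have := List.count_pos_iff.mpr ha0V
    omega
  have hd1 : 1 ≤ d := by
    have hdvd : d ∣ V.count a0 := hd ▸ Finset.gcd_dvd (List.mem_toFinset.mpr ha0V)
    rcases Nat.eq_zero_or_pos d with h | h
    · rw [h] at hdvd; simp at hdvd; omega
    · exact h
  have hrR : (1 : ℝ) ≤ r := by exact_mod_cast hr1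
  set rr1 : ℝ := (r : ℝ) * ((r : ℝ) + 1) with hrr1
  have hrr1pos : 0 < rr1 := by rw [hrr1]; positivity
  set K : ℕ := V.toFinset.card with hK
  obtain ⟨C0, N, hN1, hgood⟩ := exists_good_vec V hV r d hrmin a0 ha0V ha0 hd
  set ρ : ℝ := (q : ℝ) ^ (-(1 / rr1)) with hρ
  have hρ0 : 0 < ρ := Real.rpow_pos_of_pos hq0 _
  have hρ1 : ρ < 1 := by
    rw [hρ]
    apply Real.rpow_lt_one_of_one_lt_of_neg hq1
    rw [neg_lt, neg_zero]
    positivity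
  set Cq : ℝ := (q : ℝ) ^ ((C0 : ℝ)) with hCq
  have hCq0 : 0 < Cq := Real.rpow_pos_of_pos hq0 _
  set sfun : ℕ → ℕ := fun n => ⌊Real.sqrt ((d * n : ℕ) : ℝ)⌋₊ with hsfun
  set F : ℕ → ℝ := fun j => Cq * ((j : ℝ) + 1) ^ (2 * K) * ρ ^ j with hFdef
  -- the tendsto of the minorant
  have hdm : Tendsto (fun n : ℕ => d * n) atTop atTop := by
    apply tendsto_atTop_mono (fun n => Nat.le_mul_of_pos_left n (by omega))
    exact tendsto_id
  have hs : Tendsto sfun atTop atTop := by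
    apply tendsto_nat_floor_atTop.comp
    exact sqrt_tendsto_atTop.comp (tendsto_natCast_atTop_atTop.comp hdm)
  have hFlim : Tendsto (fun n => F (sfun n)) atTop (nhds 0) :=
    (tendsto_F_aux K Cq ρ hρ0 hρ1).comp hs
  have hglim : Tendsto (fun n => 1 - F (sfun n)) atTop (nhds 1) := by
    have := hFlim.const_sub (1 : ℝ)
    simpa using this
  refine tendsto_of_tendsto_of_tendsto_of_le_of_le' hglim tendsto_const_nhds ?_ ?_
  · -- 1 - F (sfun n) ≤ ratio, eventually
    filter_upwards [eventually_ge_atTop N] with n hn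
    set AN : ℕ := Nat.card {w : Fin (d * n) → σ // ∃ φ : α → List σ, (∀ a, φ a ≠ []) ∧
        List.ofFn w = (V.map φ).flatten ∧
        ((((V.filter fun a => V.count a ≠ r).map φ).flatten.length : ℝ) <
          Real.sqrt (d * n))} with hAN
    set BN : ℕ := Nat.card {w : Fin (d * n) → σ // IsInstance V (List.ofFn w)} with hBN
    set P : (α → List σ) → Prop := fun φ =>
      Real.sqrt (d * n) ≤ (((V.filter fun a => V.count a ≠ r).map φ).flatten.length : ℝ)
      with hP
    set DN : ℕ := Nat.card {w : Fin (d * n) → σ // ∃ φ : α → List σ, (∀ a, φ a ≠ []) ∧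
        List.ofFn w = (V.map φ).flatten ∧ P φ} with hDN
    have hmcast : (((d * n : ℕ)) : ℝ) = (d : ℝ) * n := by push_cast; ring
    have hm1 : 1 ≤ d * n := Nat.mul_le_mul hd1 (hN1.trans hn)
    have hm1R : (1 : ℝ) ≤ ((d * n : ℕ) : ℝ) := by exact_mod_cast hm1
    obtain ⟨ℓ, hpos, hsum, hlow⟩ := hgood n hn
    have hBlow : q ^ (∑ a ∈ V.toFinset, ℓ a) ≤ BN := lower_count V arb (d * n) ℓ hpos hsum
    set x : ℝ := ((d * n : ℕ) : ℝ) / r - Real.sqrt ((d * n : ℕ) : ℝ) / rr1 with hx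
    have hsqrt_le : Real.sqrt ((d * n : ℕ) : ℝ) ≤ ((d * n : ℕ) : ℝ) := by
      have h := Real.sqrt_le_sqrt (by nlinarith : ((d * n : ℕ) : ℝ) ≤ ((d * n : ℕ) : ℝ) ^ 2)
      rwa [Real.sqrt_sq (by positivity)] at h
    have hx0 : 0 ≤ x := by
      rw [hx, sub_nonneg, hrr1]
      apply div_le_div₀ (by positivity) hsqrt_le (by linarith) (by nlinarith)
    set E : ℕ := ⌊x⌋₊ with hE
    have hExp : ∀ φ : α → List σ, (∀ a, φ a ≠ []) → ((V.map φ).flatten).length = d * n →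
        P φ → ∑ a ∈ V.toFinset, (φ a).length ≤ E := by
      intro φ hne hlen ht
      apply Nat.le_floor
      rw [hx, hrr1]
      apply exponent_bound V r (d * n) hr1 hrmin φ hlen
      rw [hmcast]
      exact ht
    have hD : DN ≤ (d * n + 1) ^ K * q ^ E := by
      rw [hDN, hK, hqdef]
      exact upper_bad V arb (d * n) E P (fun φ h1 h2 h3 => hExp φ h1 h2 h3)
    -- counting relations
    have hAB : AN ≤ BN := by
      rw [hAN, hBN]
      apply Nat.card_le_card_of_injective
        (fun y => (⟨y.1, by obtain ⟨φ, h1, h2, _⟩ := y.2; exact ⟨φ, h1, h2⟩⟩ :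
          {w : Fin (d * n) → σ // IsInstance V (List.ofFn w)}))
      intro u v huv
      have h' := congrArg Subtype.val huv
      exact Subtype.ext h'
    have hBAD : BN ≤ AN + DN := by
      rw [hAN, hBN, hDN]
      rw [Nat.card_eq_fintype_card, Nat.card_eq_fintype_card, Nat.card_eq_fintype_card]
      rw [Fintype.card_subtype, Fintype.card_subtype, Fintype.card_subtype]
      refine le_trans (Finset.card_le_card ?_) (Finset.card_union_le _ _)
      intro w hw
      simp only [Finset.mem_filter, Finset.mem_univ, true_and, Finset.mem_union] at hw ⊢
      obtain ⟨φ, h1, h2⟩ := hw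
      by_cases hlt : ((((V.filter fun a => V.count a ≠ r).map φ).flatten.length : ℝ) <
          Real.sqrt (d * n))
      · exact Or.inl ⟨φ, h1, h2, hlt⟩
      · exact Or.inr ⟨φ, h1, h2, not_lt.mp hlt⟩
    -- real estimates
    have hq1N : 1 ≤ q := le_trans one_le_two hq
    have hBN1 : (1 : ℝ) ≤ (BN : ℝ) := by
      have : 1 ≤ BN := le_trans (Nat.one_le_pow _ _ (lt_of_lt_of_le (by norm_num) hq)) hBlow
      exact_mod_cast this
    have hBNpos : (0 : ℝ) < (BN : ℝ) := by linarith
    set sn : ℕ := sfun n with hsn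
    have hsle : (sn : ℝ) ≤ Real.sqrt ((d * n : ℕ) : ℝ) := Nat.floor_le (Real.sqrt_nonneg _)
    have hslt : Real.sqrt ((d * n : ℕ) : ℝ) < (sn : ℝ) + 1 := Nat.lt_floor_add_one _
    have hmlt : ((d * n : ℕ) : ℝ) < ((sn : ℝ) + 1) ^ 2 := by
      have h0 : ((d * n : ℕ) : ℝ) = Real.sqrt ((d * n : ℕ) : ℝ) * Real.sqrt ((d * n : ℕ) : ℝ) :=
        (Real.mul_self_sqrt (by positivity)).symm
      rw [h0, pow_two]
      exact mul_lt_mul'' hslt hslt (Real.sqrt_nonneg _) (Real.sqrt_nonneg _)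
    have hm1le : ((d * n + 1 : ℕ) : ℝ) ≤ ((sn : ℝ) + 1) ^ 2 := by
      have hnat : d * n < (sn + 1) ^ 2 := by exact_mod_cast hmlt
      have h5 : ((d * n + 1 : ℕ) : ℝ) ≤ (((sn + 1) ^ 2 : ℕ) : ℝ) := by exact_mod_cast hnat
      calc ((d * n + 1 : ℕ) : ℝ) ≤ (((sn + 1) ^ 2 : ℕ) : ℝ) := h5
        _ = ((sn : ℝ) + 1) ^ 2 := by push_cast; ring
    have hpowK : ((d * n + 1 : ℕ) : ℝ) ^ K ≤ ((sn : ℝ) + 1) ^ (2 * K) := by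
      rw [pow_mul]
      exact pow_le_pow_left₀ (by positivity) hm1le K
    have hqE : (q : ℝ) ^ (E : ℕ) ≤ (q : ℝ) ^ x := by
      rw [← Real.rpow_natCast (q : ℝ) E]
      exact Real.rpow_le_rpow_of_exponent_le hq1.le (Nat.floor_le hx0)
    have hqLg : (q : ℝ) ^ (((d * n : ℕ) : ℝ) / r - C0) ≤
        (q : ℝ) ^ ((∑ a ∈ V.toFinset, ℓ a : ℕ) : ℕ) := by
      rw [← Real.rpow_natCast (q : ℝ) (∑ a ∈ V.toFinset, ℓ a)]
      apply Real.rpow_le_rpow_of_exponent_le hq1.le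
      rw [hmcast]
      exact_mod_cast hlow
    have hqLgBN : (q : ℝ) ^ (((d * n : ℕ) : ℝ) / r - C0) ≤ (BN : ℝ) := by
      refine le_trans hqLg ?_
      exact_mod_cast hBlow
    have hqpowpos : (0 : ℝ) < (q : ℝ) ^ (((d * n : ℕ) : ℝ) / r - C0) :=
      Real.rpow_pos_of_pos hq0 _
    have hsplitpow : (q : ℝ) ^ x / (q : ℝ) ^ (((d * n : ℕ) : ℝ) / r - C0)
        = (q : ℝ) ^ ((C0 : ℝ)) * (q : ℝ) ^ (-(Real.sqrt ((d * n : ℕ) : ℝ)) / rr1) := by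
      rw [← Real.rpow_sub hq0, ← Real.rpow_add hq0]
      congr 1
      rw [hx]
      ring
    have hDF : (DN : ℝ) / (BN : ℝ) ≤ F sn := by
      have hDle : (DN : ℝ) ≤ ((d * n + 1 : ℕ) : ℝ) ^ K * (q : ℝ) ^ (E : ℕ) := by
        have : (DN : ℝ) ≤ (((d * n + 1) ^ K * q ^ E : ℕ) : ℝ) := by exact_mod_cast hD
        calc (DN : ℝ) ≤ (((d * n + 1) ^ K * q ^ E : ℕ) : ℝ) := this
          _ = ((d * n + 1 : ℕ) : ℝ) ^ K * (q : ℝ) ^ (E : ℕ) := by push_cast; ring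
      calc (DN : ℝ) / (BN : ℝ)
          ≤ (((d * n + 1 : ℕ) : ℝ) ^ K * (q : ℝ) ^ (E : ℕ)) /
            (q : ℝ) ^ (((d * n : ℕ) : ℝ) / r - C0) :=
            div_le_div₀ (by positivity) hDle hqpowpos hqLgBN
        _ ≤ (((sn : ℝ) + 1) ^ (2 * K) * (q : ℝ) ^ x) /
            (q : ℝ) ^ (((d * n : ℕ) : ℝ) / r - C0) :=
            (div_le_div_iff_of_pos_right hqpowpos).mpr
              (mul_le_mul hpowK hqE (by positivity) (by positivity))
        _ = ((sn : ℝ) + 1) ^ (2 * K) *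
            ((q : ℝ) ^ x / (q : ℝ) ^ (((d * n : ℕ) : ℝ) / r - C0)) := by ring
        _ = ((sn : ℝ) + 1) ^ (2 * K) *
            ((q : ℝ) ^ ((C0 : ℝ)) * (q : ℝ) ^ (-(Real.sqrt ((d * n : ℕ) : ℝ)) / rr1)) := by
            rw [hsplitpow]
        _ ≤ ((sn : ℝ) + 1) ^ (2 * K) * (Cq * ρ ^ sn) := by
            apply mul_le_mul_of_nonneg_left ?_ (by positivity)
            rw [hCq]
            apply mul_le_mul_of_nonneg_left ?_ (Real.rpow_pos_of_pos hq0 _).le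
            have hexp : -(Real.sqrt ((d * n : ℕ) : ℝ)) / rr1 ≤ -(sn : ℝ) / rr1 :=
              (div_le_div_iff_of_pos_right hrr1pos).mpr (neg_le_neg hsle)
            have h1 : (q : ℝ) ^ (-(Real.sqrt ((d * n : ℕ) : ℝ)) / rr1) ≤
                (q : ℝ) ^ (-(sn : ℝ) / rr1) :=
              Real.rpow_le_rpow_of_exponent_le hq1.le hexp
            refine le_trans h1 (le_of_eq ?_)
            rw [hρ, ← Real.rpow_natCast ((q : ℝ) ^ (-(1 / rr1))) sn,
              ← Real.rpow_mul hq0.le]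
            congr 1
            ring
        _ = F sn := by rw [hFdef]; ring
    have hANge : (BN : ℝ) - (DN : ℝ) ≤ (AN : ℝ) := by
      have : (BN : ℝ) ≤ (AN : ℝ) + (DN : ℝ) := by exact_mod_cast hBAD
      linarith
    calc 1 - F sn ≤ 1 - (DN : ℝ) / (BN : ℝ) := by linarith [hDF]
      _ = ((BN : ℝ) - (DN : ℝ)) / (BN : ℝ) := by field_simp
      _ ≤ (AN : ℝ) / (BN : ℝ) := (div_le_div_iff_of_pos_right hBNpos).mpr hANge
  · -- ratio ≤ 1, always
    apply Eventually.of_forall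
    intro n
    have hAB : Nat.card {w : Fin (d * n) → σ // ∃ φ : α → List σ, (∀ a, φ a ≠ []) ∧
        List.ofFn w = (V.map φ).flatten ∧
        ((((V.filter fun a => V.count a ≠ r).map φ).flatten.length : ℝ) <
          Real.sqrt (d * n))} ≤
        Nat.card {w : Fin (d * n) → σ // IsInstance V (List.ofFn w)} := by
      apply Nat.card_le_card_of_injective
        (fun y => (⟨y.1, by obtain ⟨φ, h1, h2, _⟩ := y.2; exact ⟨φ, h1, h2⟩⟩ :
          {w : Fin (d * n) → σ // IsInstance V (List.ofFn w)}))
      intro u v huv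
      have h' := congrArg Subtype.val huv
      exact Subtype.ext h'
    apply div_le_one_of_le₀
    · exact_mod_cast hAB
    · positivity
end

section
/- Let V be a doubled word with exactly k distinct letters x_1, …, x_k, where x_i has multiplicity r_i in V; let d = gcd(r_1, …, r_k) and r = min_i r_i. Let Σ be a finite alphabet with q ≥ 2 letters. Then for every n ≥ 1, I_n(V,Σ) ≤ [∏_{i=0}^{k} (n/d + k + 1 − i)/(k+1)!] · q^{n(1−r)/r}, where the first factor is the generalized binomial coefficient C(n/d + k + 1, k + 1) evaluated over the reals. -/
open Filter Asymptotics

private lemma flatten_inj {σ : Type*} (L1 : List (List σ)) : ∀ (L2 : List (List σ)),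
    L1.map List.length = L2.map List.length → L1.flatten = L2.flatten → L1 = L2 := by
  induction L1 with
  | nil => intro L2 h1 _; cases L2 <;> simp_all
  | cons a L1 ih =>
    intro L2 h1 h2
    cases L2 with
    | nil => simp at h1
    | cons b L2 =>
      simp only [List.map_cons, List.cons.injEq] at h1
      simp only [List.flatten_cons] at h2
      obtain ⟨hab, hL⟩ := List.append_inj h2 h1.1
      rw [hab, ih L2 h1.2 hL]

private lemma card_le_choose {ι : Type*} [Fintype ι] {k m : ℕ} (hk : Fintype.card ι = k)
    (S : Set (ι → ℕ)) (hS : ∀ ℓ ∈ S, (∀ a, 1 ≤ ℓ a) ∧ ∑ a, ℓ a ≤ m) :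
    Nat.card S ≤ m.choose k := by
  classical
  let e : Fin k ≃ ι := (Fintype.equivFinOfCardEq hk).symm
  let g : (ι → ℕ) → ℕ → ℕ := fun ℓ j => if h : j < k then ℓ (e ⟨j, h⟩) else 1
  let P : (ι → ℕ) → ℕ → ℕ := fun ℓ t => ∑ j ∈ Finset.range t, g ℓ j
  have hg1 : ∀ ℓ ∈ S, ∀ j, 1 ≤ g ℓ j := by
    intro ℓ hℓ j
    simp only [g]
    split
    · exact (hS ℓ hℓ).1 _
    · exact le_refl 1
  have hPsucc : ∀ ℓ t, P ℓ (t + 1) = P ℓ t + g ℓ t := by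
    intro ℓ t; simp only [P, Finset.sum_range_succ]
  have hPmono : ∀ ℓ ∈ S, StrictMono (P ℓ) := by
    intro ℓ hℓ
    apply strictMono_nat_of_lt_succ
    intro t
    rw [hPsucc]
    have := hg1 ℓ hℓ t
    omega
  have hPk : ∀ ℓ, P ℓ k = ∑ a, ℓ a := by
    intro ℓ
    have : P ℓ k = ∑ j : Fin k, g ℓ j := Finset.sum_range (fun j => g ℓ j)
    rw [this]
    have h2 : ∀ j : Fin k, g ℓ (j : ℕ) = ℓ (e j) := by
      intro j; simp only [g]; rw [dif_pos j.2]
    rw [Finset.sum_congr rfl (fun j _ => h2 j)]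
    exact Equiv.sum_comp e ℓ
  have hP1 : ∀ ℓ ∈ S, ∀ t, 1 ≤ P ℓ (t + 1) := by
    intro ℓ hℓ t
    rw [hPsucc]
    have := hg1 ℓ hℓ t
    omega
  have hPle : ∀ ℓ ∈ S, ∀ t, t ≤ k → P ℓ t ≤ m := by
    intro ℓ hℓ t ht
    calc P ℓ t ≤ P ℓ k := (hPmono ℓ hℓ).monotone ht
    _ = ∑ a, ℓ a := hPk ℓ
    _ ≤ m := (hS ℓ hℓ).2
  have hsm : ∀ ℓ ∈ S, StrictMono (fun i : Fin k => P ℓ ((i : ℕ) + 1) - 1) := by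
    intro ℓ hℓ i j hij
    have h1 : P ℓ ((i : ℕ) + 1) < P ℓ ((j : ℕ) + 1) :=
      (hPmono ℓ hℓ) (by have := Fin.lt_iff_val_lt_val.1 hij; omega)
    have h2 := hP1 ℓ hℓ (i : ℕ)
    simp only
    omega
  -- the injection
  let F : S → {s : Finset ℕ // s ∈ Finset.powersetCard k (Finset.range m)} := fun ℓ =>
    ⟨Finset.univ.image (fun i : Fin k => P ℓ.1 ((i : ℕ) + 1) - 1), by
      rw [Finset.mem_powersetCard]
      constructor
      · intro x hx
        obtain ⟨i, _, rfl⟩ := Finset.mem_image.1 hx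
        have h1 := hP1 ℓ.1 ℓ.2 (i : ℕ)
        have h2 := hPle ℓ.1 ℓ.2 ((i : ℕ) + 1) i.2
        rw [Finset.mem_range]
        omega
      · rw [Finset.card_image_of_injective _ (hsm ℓ.1 ℓ.2).injective, Finset.card_univ,
          Fintype.card_fin]⟩
  have hFinj : Function.Injective F := by
    intro ℓ ℓ' hF
    have hs := congrArg (fun x => x.1) hF
    simp only [F] at hs
    -- both partial sum functions agree
    set s : Finset ℕ := Finset.univ.image (fun i : Fin k => P ℓ'.1 ((i : ℕ) + 1) - 1) with hsdef
    have hcard : s.card = k := by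
      have := (Finset.mem_powersetCard.1 (F ℓ').2).2
      simpa [F] using this
    have hf1 : ∀ i : Fin k, (fun i : Fin k => P ℓ.1 ((i : ℕ) + 1) - 1) i ∈ s := by
      intro i; rw [← hs]; exact Finset.mem_image_of_mem _ (Finset.mem_univ i)
    have hf2 : ∀ i : Fin k, (fun i : Fin k => P ℓ'.1 ((i : ℕ) + 1) - 1) i ∈ s := by
      intro i; exact Finset.mem_image_of_mem _ (Finset.mem_univ i)
    have he1 := Finset.orderEmbOfFin_unique hcard hf1 (hsm ℓ.1 ℓ.2)
    have he2 := Finset.orderEmbOfFin_unique hcard hf2 (hsm ℓ'.1 ℓ'.2)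
    have hPP : ∀ i : Fin k, P ℓ.1 ((i : ℕ) + 1) = P ℓ'.1 ((i : ℕ) + 1) := by
      intro i
      have := congrFun (he1.trans he2.symm) i
      have h1 := hP1 ℓ.1 ℓ.2 (i : ℕ)
      have h2 := hP1 ℓ'.1 ℓ'.2 (i : ℕ)
      omega
    have hPall : ∀ t, t ≤ k → P ℓ.1 t = P ℓ'.1 t := by
      intro t ht
      cases t with
      | zero => simp [P]
      | succ t => exact hPP ⟨t, ht⟩
    have hgall : ∀ j, j < k → g ℓ.1 j = g ℓ'.1 j := by
      intro j hj
      have h1 := hPsucc ℓ.1 j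
      have h2 := hPsucc ℓ'.1 j
      have e1 := hPall j (le_of_lt hj)
      have e2 := hPall (j + 1) hj
      omega
    apply Subtype.ext
    funext a
    have ha : ℓ.1 (e (e.symm a)) = ℓ'.1 (e (e.symm a)) := by
      have := hgall (e.symm a) (e.symm a).2
      simpa only [g, dif_pos (e.symm a).2, Fin.eta] using this
    simpa using ha
  calc Nat.card S ≤ Nat.card {s : Finset ℕ // s ∈ Finset.powersetCard k (Finset.range m)} :=
        Nat.card_le_card_of_injective F hFinj
    _ = (Finset.powersetCard k (Finset.range m)).card := by
        rw [Nat.card_eq_fintype_card]; exact Fintype.card_coe _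
    _ = m.choose k := by rw [Finset.card_powersetCard, Finset.card_range]

/-- Let `V` be a doubled word with exactly `k` distinct letters, minimal letter
multiplicity `r`, gcd of multiplicities `d`, and let `|Σ| = q ≥ 2`. Then for all
`n ≥ 1`, `I_n(V,Σ) ≤ C(n/d + k + 1, k + 1) q^{n(1-r)/r}`, where the binomial
coefficient is the generalized one, `∏_{i=0}^{k} (n/d + k + 1 - i) / (k+1)!`. -/
theorem stmt13 {α σ : Type*} [DecidableEq α] [Fintype σ] (V : List α)
    (hdbl : Doubled V) (k r d : ℕ)
    (hk : k = V.toFinset.card)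
    (hr : (∀ a ∈ V, r ≤ V.count a) ∧ ∃ a ∈ V, V.count a = r)
    (hd : d = V.toFinset.gcd fun a => V.count a)
    (hq : 2 ≤ Fintype.card σ) :
    ∀ n : ℕ, 1 ≤ n →
      instProb V σ n ≤
        ((∏ i ∈ Finset.range (k + 1), ((n : ℝ) / d + k + 1 - i)) / (Nat.factorial (k + 1))) *
          (Fintype.card σ : ℝ) ^ ((n : ℝ) * (1 - (r : ℝ)) / r) := by
  classical
  intro n hn
  obtain ⟨hrle, a0, ha0, ha0r⟩ := hr
  have hr2 : 2 ≤ r := ha0r ▸ hdbl a0 ha0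
  have ha0A : a0 ∈ V.toFinset := List.mem_toFinset.2 ha0
  have hddvd : ∀ a ∈ V.toFinset, d ∣ V.count a := fun a ha => hd ▸ Finset.gcd_dvd ha
  have hd0 : 0 < d := Nat.pos_of_dvd_of_pos (hddvd a0 ha0A)
    (List.count_pos_iff.2 ha0)
  have hr0 : 0 < r := by omega
  have hcard1 : 1 ≤ Fintype.card σ := by omega
  haveI : Nonempty σ := Fintype.card_pos_iff.1 (by omega)
  let z : σ := Classical.arbitrary σ
  set A := V.toFinset with hA
  set M := n / r with hMdef
  set m := n / d with hmdef
  have hcpos : ∀ a ∈ A, 0 < V.count a := fun a ha => List.count_pos_iff.2 (List.mem_toFinset.1 ha)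
  have hdle : ∀ a ∈ A, d ≤ V.count a := fun a ha => Nat.le_of_dvd (hcpos a ha) (hddvd a ha)
  have hrleA : ∀ a ∈ A, r ≤ V.count a := fun a ha => hrle a (List.mem_toFinset.1 ha)
  -- the set of admissible length functions
  let LSet : Set ({a // a ∈ A} → ℕ) :=
    {ℓ | (∀ a, 1 ≤ ℓ a) ∧ ∑ a, V.count a.1 * ℓ a = n}
  have hLbound : ∀ ℓ ∈ LSet, ∀ a, ℓ a ≤ n := by
    intro ℓ hℓ a
    have h1 : V.count a.1 * ℓ a ≤ ∑ b, V.count b.1 * ℓ b :=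
      Finset.single_le_sum (f := fun b : {a // a ∈ A} => V.count b.1 * ℓ b)
        (fun b _ => Nat.zero_le _) (Finset.mem_univ a)
    have h2 : ℓ a ≤ V.count a.1 * ℓ a :=
      Nat.le_mul_of_pos_left _ (hcpos a.1 a.2)
    have h3 := hℓ.2
    omega
  haveI hLfinite : Finite ↥LSet := by
    refine Finite.of_injective
      (fun ℓ : ↥LSet => (fun a => (⟨min (ℓ.1 a) n, by omega⟩ : Fin (n + 1)))) ?_
    intro ℓ ℓ' h
    apply Subtype.ext; funext a
    have h0 := congrFun h a
    have h1 := hLbound ℓ.1 ℓ.2 a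
    have h2 := hLbound ℓ'.1 ℓ'.2 a
    simp only [Fin.mk.injEq] at h0
    omega
  -- facts about homomorphisms witnessing instances
  have keysum : ∀ φ : α → List σ, ((V.map φ).flatten).length = n →
      ∑ a ∈ A, V.count a * (φ a).length = n := by
    intro φ hφ
    rw [List.length_flatten, List.map_map] at hφ
    rw [← hφ, Finset.sum_list_map_count]
    simp [smul_eq_mul]
    rfl
  have keyle : ∀ φ : α → List σ, ((V.map φ).flatten).length = n →
      ∑ a ∈ A, (φ a).length ≤ M := by
    intro φ hφ
    have h1 : r * ∑ a ∈ A, (φ a).length ≤ ∑ a ∈ A, V.count a * (φ a).length := by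
      rw [Finset.mul_sum]
      exact Finset.sum_le_sum fun a ha => Nat.mul_le_mul_right _ (hrleA a ha)
    rw [keysum φ hφ] at h1
    exact (Nat.le_div_iff_mul_le hr0).2 (by rw [Nat.mul_comm]; exact h1)
  -- the injection from instances into length functions × padded words
  set Inst := {w : Fin n → σ // IsInstance V (List.ofFn w)} with hInst
  have hlen : ∀ w : Inst, ((V.map w.2.choose).flatten).length = n := by
    intro w
    rw [← w.2.choose_spec.2, List.length_ofFn]
  have hmem : ∀ w : Inst, (fun a : {a // a ∈ A} => (w.2.choose a.1).length) ∈ LSet := by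
    intro w
    constructor
    · intro a
      exact List.length_pos_iff.2 (w.2.choose_spec.1 a.1)
    · rw [Finset.sum_coe_sort A (fun a => V.count a * (w.2.choose a).length)]
      exact keysum _ (hlen w)
  have hcatlen : ∀ w : Inst,
      ((A.toList.map w.2.choose).flatten).length = ∑ a ∈ A, (w.2.choose a).length := by
    intro w
    rw [List.length_flatten, List.map_map]
    exact Finset.sum_map_toList A (fun a => (w.2.choose a).length)
  have hcatle : ∀ w : Inst, ((A.toList.map w.2.choose).flatten).length ≤ M := by
    intro w
    rw [hcatlen w]
    exact keyle _ (hlen w)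
  let F : Inst → ↥LSet × (Fin M → σ) := fun w =>
    (⟨fun a => (w.2.choose a.1).length, hmem w⟩,
      fun i => ((A.toList.map w.2.choose).flatten).getD i z)
  have hFinj : Function.Injective F := by
    intro w w' h
    have h1 : (fun a : {a // a ∈ A} => (w.2.choose a.1).length)
        = (fun a : {a // a ∈ A} => (w'.2.choose a.1).length) :=
      congrArg Subtype.val (congrArg Prod.fst h)
    have h2 := congrArg Prod.snd h
    have hlena : ∀ a ∈ A, (w.2.choose a).length = (w'.2.choose a).length := by
      intro a ha
      exact congrFun h1 ⟨a, ha⟩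
    have hceq : ((A.toList.map w.2.choose).flatten).length
        = ((A.toList.map w'.2.choose).flatten).length := by
      rw [hcatlen w, hcatlen w']
      exact Finset.sum_congr rfl hlena
    have hcat : (A.toList.map w.2.choose).flatten = (A.toList.map w'.2.choose).flatten := by
      apply List.ext_getElem hceq
      intro i hi1 hi2
      have hiM : i < M := lt_of_lt_of_le hi1 (hcatle w)
      have := congrFun h2 ⟨i, hiM⟩
      simp only [F] at this
      rwa [List.getD_eq_getElem _ _ hi1, List.getD_eq_getElem _ _ hi2] at this
    have hmapslen : (A.toList.map w.2.choose).map List.length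
        = (A.toList.map w'.2.choose).map List.length := by
      simp only [List.map_map]
      exact List.map_congr_left (fun a ha => hlena a (Finset.mem_toList.1 ha))
    have hmaps := flatten_inj _ _ hmapslen hcat
    have hpt : ∀ a ∈ V, w.2.choose a = w'.2.choose a := by
      intro a ha
      exact List.map_inj_left.1 hmaps a (Finset.mem_toList.2 (List.mem_toFinset.2 ha))
    have hofn : List.ofFn w.1 = List.ofFn w'.1 := by
      rw [w.2.choose_spec.2, w'.2.choose_spec.2, List.map_congr_left hpt]
    exact Subtype.ext (List.ofFn_injective hofn)
  have hstep1 : Nat.card Inst ≤ Nat.card ↥LSet * Fintype.card σ ^ M := by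
    have hc := Nat.card_le_card_of_injective F hFinj
    rwa [Nat.card_prod, Nat.card_eq_fintype_card (α := Fin M → σ), Fintype.card_fun,
      Fintype.card_fin] at hc
  have hstep2 : Nat.card ↥LSet ≤ m.choose k := by
    apply card_le_choose (by rw [Fintype.card_coe, hk]) LSet
    intro ℓ hℓ
    refine ⟨hℓ.1, ?_⟩
    have h1 : d * ∑ a, ℓ a ≤ ∑ a : {a // a ∈ A}, V.count a.1 * ℓ a := by
      rw [Finset.mul_sum]
      exact Finset.sum_le_sum fun a _ => Nat.mul_le_mul_right _ (hdle a.1 a.2)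
    rw [hℓ.2] at h1
    exact (Nat.le_div_iff_mul_le hd0).2 (by rw [Nat.mul_comm]; exact h1)
  have hstep3 : m.choose k ≤ (m + k + 1).choose (k + 1) := by
    calc m.choose k ≤ (m + k).choose k := Nat.choose_le_choose k (Nat.le_add_right m k)
      _ ≤ (m + k + 1).choose (k + 1) := by
          rw [Nat.choose_succ_succ]; exact Nat.le_add_right _ _
  -- real estimates
  have hQ0 : (0 : ℝ) < (Fintype.card σ : ℝ) := by positivity
  have hQ1 : (1 : ℝ) ≤ (Fintype.card σ : ℝ) := by exact_mod_cast hcard1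
  have hfact : (0 : ℝ) < ((k + 1).factorial : ℝ) := by positivity
  have hmnd : (m : ℝ) ≤ (n : ℝ) / (d : ℝ) := by
    rw [hmdef]; exact Nat.cast_div_le
  have hfac_nonneg : ∀ i ∈ Finset.range (k + 1), (0 : ℝ) ≤ (m : ℝ) + k + 1 - i := by
    intro i hi
    have : (i : ℝ) ≤ (k : ℝ) := by
      exact_mod_cast Nat.lt_succ_iff.1 (Finset.mem_range.1 hi)
    linarith [Nat.cast_nonneg (α := ℝ) m]
  have hBfac_nonneg : ∀ i ∈ Finset.range (k + 1),
      (0 : ℝ) ≤ (n : ℝ) / d + k + 1 - i := by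
    intro i hi
    have h1 : (i : ℝ) ≤ (k : ℝ) := by
      exact_mod_cast Nat.lt_succ_iff.1 (Finset.mem_range.1 hi)
    have h2 : (0 : ℝ) ≤ (n : ℝ) / d := by positivity
    linarith
  have hchoose_cast : (((m + k + 1).choose (k + 1) : ℕ) : ℝ)
      = (∏ i ∈ Finset.range (k + 1), ((m : ℝ) + k + 1 - i)) / ((k + 1).factorial : ℝ) := by
    rw [eq_div_iff (ne_of_gt hfact)]
    have h1 : ((m + k + 1).choose (k + 1)) * ((k + 1).factorial)
        = (m + k + 1).descFactorial (k + 1) := by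
      rw [Nat.descFactorial_eq_factorial_mul_choose, Nat.mul_comm]
    have h2 := Nat.descFactorial_eq_prod_range (m + k + 1) (k + 1)
    have h3 : (∏ i ∈ Finset.range (k + 1), (m + k + 1 - i) : ℕ)
        = ∏ i ∈ Finset.range (k + 1), ((m : ℝ) + k + 1 - i) := by
      rw [Nat.cast_prod]
      apply Finset.prod_congr rfl
      intro i hi
      have hik : i ≤ k := Nat.lt_succ_iff.1 (Finset.mem_range.1 hi)
      have : i ≤ m + k + 1 := (hik.trans (Nat.le_add_left k m)).trans (Nat.le_succ _)
      rw [Nat.cast_sub this]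
      push_cast
      ring
    calc (((m + k + 1).choose (k + 1) : ℕ) : ℝ) * ((k + 1).factorial : ℝ)
        = (((m + k + 1).choose (k + 1) * (k + 1).factorial : ℕ) : ℝ) := by push_cast; ring
      _ = (((m + k + 1).descFactorial (k + 1) : ℕ) : ℝ) := by rw [h1]
      _ = ((∏ i ∈ Finset.range (k + 1), (m + k + 1 - i) : ℕ) : ℝ) := by rw [h2]
      _ = ∏ i ∈ Finset.range (k + 1), ((m : ℝ) + k + 1 - i) := h3
  have hprod_le : (∏ i ∈ Finset.range (k + 1), ((m : ℝ) + k + 1 - i))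
      ≤ ∏ i ∈ Finset.range (k + 1), ((n : ℝ) / d + k + 1 - i) := by
    apply Finset.prod_le_prod hfac_nonneg
    intro i hi
    linarith [hmnd]
  have hchooseB : (((m + k + 1).choose (k + 1) : ℕ) : ℝ)
      ≤ (∏ i ∈ Finset.range (k + 1), ((n : ℝ) / d + k + 1 - i)) / ((k + 1).factorial : ℝ) := by
    rw [hchoose_cast]
    gcongr

  have hmk_le_B : ((m.choose k : ℕ) : ℝ)
      ≤ (∏ i ∈ Finset.range (k + 1), ((n : ℝ) / d + k + 1 - i)) / ((k + 1).factorial : ℝ) := by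
    refine le_trans ?_ hchooseB
    exact_mod_cast hstep3
  have hB_nonneg : (0 : ℝ)
      ≤ (∏ i ∈ Finset.range (k + 1), ((n : ℝ) / d + k + 1 - i)) / ((k + 1).factorial : ℝ) :=
    div_nonneg (Finset.prod_nonneg hBfac_nonneg) hfact.le
  -- the power estimate
  have hpow : ((Fintype.card σ : ℝ) ^ M) / ((Fintype.card σ : ℝ) ^ n)
      ≤ (Fintype.card σ : ℝ) ^ ((n : ℝ) * (1 - (r : ℝ)) / r) := by
    rw [div_le_iff₀ (pow_pos hQ0 n)]
    have h1 : (Fintype.card σ : ℝ) ^ ((n : ℝ) * (1 - (r : ℝ)) / r) * (Fintype.card σ : ℝ) ^ n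
        = (Fintype.card σ : ℝ) ^ ((n : ℝ) * (1 - (r : ℝ)) / r + n) := by
      rw [Real.rpow_add hQ0, Real.rpow_natCast]
    have h2 : (n : ℝ) * (1 - (r : ℝ)) / r + n = (n : ℝ) / r := by
      have hrne : (r : ℝ) ≠ 0 := by positivity
      field_simp
      ring
    rw [h1, h2, ← Real.rpow_natCast (Fintype.card σ : ℝ) M]
    apply Real.rpow_le_rpow_of_exponent_le hQ1
    rw [hMdef]
    exact Nat.cast_div_le
  -- conclusion
  have hnum : ((Nat.card Inst : ℕ) : ℝ) ≤ ((m.choose k : ℕ) : ℝ) * (Fintype.card σ : ℝ) ^ M := by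
    have : Nat.card Inst ≤ m.choose k * Fintype.card σ ^ M :=
      le_trans hstep1 (Nat.mul_le_mul_right _ hstep2)
    exact_mod_cast this
  have hfinal : (Nat.card Inst : ℝ) / (Fintype.card σ : ℝ) ^ n
      ≤ ((m.choose k : ℕ) : ℝ) * ((Fintype.card σ : ℝ) ^ M / (Fintype.card σ : ℝ) ^ n) := by
    rw [← mul_div_assoc]
    gcongr

  calc instProb V σ n = (Nat.card Inst : ℝ) / (Fintype.card σ : ℝ) ^ n := rfl
    _ ≤ ((m.choose k : ℕ) : ℝ) * ((Fintype.card σ : ℝ) ^ M / (Fintype.card σ : ℝ) ^ n) := hfinal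
    _ ≤ ((∏ i ∈ Finset.range (k + 1), ((n : ℝ) / d + k + 1 - i)) / ((k + 1).factorial : ℝ)) *
          (Fintype.card σ : ℝ) ^ ((n : ℝ) * (1 - (r : ℝ)) / r) :=
        mul_le_mul hmk_le_B hpow
          (div_nonneg (pow_nonneg hQ0.le M) (pow_nonneg hQ0.le n)) hB_nonneg
end
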